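/- arXiv:2512.04410 — 3 statements merged into one kernel-verified Lean document; each statement's English description precedes it below -/
import Mathlib

section
/- Let $d\ge 3$ and $c>0$. Define $\Gamma(R)=R^{3/2}$ if $d=3$, $\Gamma(R)=R(\log R)^{1/2}$ if $d=4$, and $\Gamma(R)=R$ if $d\ge 5$. There exists $C=C(d,c)$ such that for all $R\ge 2$: $\int_{\mathbb{B}_{2R}}\Big|\int_{\mathbb{B}_R}(|x+y|+1)^{2-d}(|x|+1)^{1-d}\,dx\Big|^2 dy \le C\,\Gamma(R)^2$, where $\mathbb{B}_r$ denotes the Euclidean ball of radius $r$ centered at the origin in $\mathbb{R}^d$. -/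
open MeasureTheory

/-- The rate function `Γ(R)`: `R^{3/2}` for `d = 3`, `R (log R)^{1/2}` for `d = 4`,
and `R` for `d ≥ 5`. -/
noncomputable def Gam (d : ℕ) (R : ℝ) : ℝ :=
  if d = 3 then R ^ ((3 : ℝ) / 2)
  else if d = 4 then R * (Real.log R) ^ ((1 : ℝ) / 2)
  else R

open Metric Set

namespace Stmt6Aux


variable (d : ℕ)

local notation "E" => EuclideanSpace ℝ (Fin d)

noncomputable def kap : ℝ := d * (volume (ball (0 : E) 1)).toReal

lemma nontriv (hd : 1 ≤ d) : Nontrivial E := by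
  apply nontrivial_of_ne (EuclideanSpace.single (⟨0, hd⟩ : Fin d) (1:ℝ)) 0
  intro h
  have := congrArg (fun v : E => v (⟨0, hd⟩ : Fin d)) h
  simp [EuclideanSpace.single_apply] at this

lemma kap_pos (hd : 1 ≤ d) : 0 < kap d := by
  haveI := nontriv d hd
  apply mul_pos
  · exact_mod_cast Nat.pos_of_ne_zero (by omega)
  · exact ENNReal.toReal_pos (measure_ball_pos volume 0 one_pos).ne'
      (measure_ball_lt_top).ne

lemma radial (hd : 1 ≤ d) (S : ℝ) (φ : ℝ → ℝ) :
    ∫ x in ball (0 : E) S, φ ‖x‖ =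
      kap d * ∫ y in Ioo (0:ℝ) S, y ^ (d - 1) * φ y := by
  haveI := nontriv d hd
  have hdim : Module.finrank ℝ E = d := by
    simpa using finrank_euclideanSpace (𝕜 := ℝ) (n := Fin d)
  have hball : ball (0 : E) S = (fun x : E => ‖x‖) ⁻¹' Iio S := by
    ext x; simp [mem_ball_zero_iff]
  have h1 : ∫ x in ball (0 : E) S, φ ‖x‖ = ∫ x : E, (Iio S).indicator φ ‖x‖ := by
    rw [← integral_indicator measurableSet_ball]
    congr 1
    ext x
    rw [hball]
    exact Set.indicator_comp_right (fun x : E => ‖x‖) (s := Iio S) (g := φ)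
  rw [h1, integral_fun_norm_addHaar volume ((Iio S).indicator φ), hdim]
  have h2 : ∀ y : ℝ, y ^ (d-1) • (Iio S).indicator φ y
      = (Iio S).indicator (fun y => y ^ (d-1) * φ y) y := by
    intro y; by_cases h : y ∈ Iio S <;> simp [h]
  rw [nsmul_eq_mul, smul_eq_mul]
  simp only [h2]
  rw [setIntegral_indicator measurableSet_Iio, Set.Ioi_inter_Iio]
  rw [kap, measureReal_def]; ring

lemma pw (hd : 1 ≤ d) (a y : ℝ) (hy : 0 ≤ y) :
    y ^ (d-1) * (y+1) ^ a ≤ (y+1) ^ (((d:ℝ) - 1) + a) := by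
  have h1 : (0:ℝ) < y + 1 := by linarith
  rw [Real.rpow_add h1]
  apply mul_le_mul_of_nonneg_right _ (Real.rpow_nonneg h1.le a)
  have h2 : (y+1:ℝ) ^ ((d:ℝ) - 1) = (y+1) ^ (d-1 : ℕ) := by
    rw [← Real.rpow_natCast (y+1) (d-1)]
    congr 1
    push_cast [Nat.cast_sub hd]
    ring
  rw [h2]
  exact pow_le_pow_left₀ hy (by linarith) _






noncomputable def bet (R : ℝ) : ℝ :=
  if d = 3 then 3 * R else if d = 4 then 3 * Real.log R else 1




lemma boundA (hd : 3 ≤ d) {R : ℝ} (hR : 0 < R) :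
    ∫ x in ball (0 : E) R, (‖x‖ + 1) ^ ((1 : ℝ) - d) ≤ kap d * R := by
  rw [radial d (by omega) R (fun y => (y + 1) ^ ((1:ℝ) - d))]
  apply mul_le_mul_of_nonneg_left _ (kap_pos d (by omega)).le
  have hpt : ∀ y ∈ Ioo (0:ℝ) R, y ^ (d-1) * (y+1) ^ ((1:ℝ) - d) ≤ 1 := by
    intro y hy
    have := pw d (by omega) ((1:ℝ) - d) y hy.1.le
    calc y ^ (d-1) * (y+1) ^ ((1:ℝ) - d) ≤ (y+1) ^ (((d:ℝ) - 1) + ((1:ℝ) - d)) := this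
      _ = 1 := by norm_num
  have hint : IntegrableOn (fun y => y ^ (d-1) * (y+1) ^ ((1:ℝ) - d)) (Ioo (0:ℝ) R) := by
    apply Integrable.mono' (integrable_const (1:ℝ))
    · exact ((measurable_id.pow_const _).mul
        ((measurable_id.add_const 1).pow_const _)).aestronglyMeasurable
    · filter_upwards [ae_restrict_mem measurableSet_Ioo] with y hy
      rw [Real.norm_eq_abs, abs_of_nonneg (mul_nonneg (pow_nonneg hy.1.le _)
        (Real.rpow_nonneg (by linarith [hy.1]) _))]
      exact hpt y hy
  calc ∫ y in Ioo (0:ℝ) R, y ^ (d-1) * (y+1) ^ ((1:ℝ) - d)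
      ≤ ∫ _y in Ioo (0:ℝ) R, (1:ℝ) :=
        setIntegral_mono_on hint (integrableOn_const (by simp) (by simp))
          measurableSet_Ioo hpt
    _ = R := by simp [Real.volume_Ioo, hR.le]

lemma boundB (hd : 3 ≤ d) {R : ℝ} (hR : 2 ≤ R) :
    ∫ z in ball (0 : E) (3*R), (‖z‖ + 1) ^ ((4 : ℝ) - 2*d) ≤ kap d * bet d R := by
  have hR0 : (0:ℝ) < R := by linarith
  rw [radial d (by omega) (3*R) (fun y => (y + 1) ^ ((4:ℝ) - 2*d))]
  apply mul_le_mul_of_nonneg_left _ (kap_pos d (by omega)).le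
  have hpt : ∀ y ∈ Ioo (0:ℝ) (3*R), y ^ (d-1) * (y+1) ^ ((4:ℝ) - 2*d)
      ≤ (y+1) ^ ((3:ℝ) - d) := by
    intro y hy
    have := pw d (by omega) ((4:ℝ) - 2*d) y hy.1.le
    convert this using 2
    ring
  have hb1 : ∀ y ∈ Ioo (0:ℝ) (3*R), (y+1) ^ ((3:ℝ) - d) ≤ 1 := by
    intro y hy
    apply Real.rpow_le_one_of_one_le_of_nonpos (by linarith [hy.1])
    have : (3:ℝ) ≤ (d:ℝ) := by exact_mod_cast hd
    linarith
  have hmes : Measurable fun y : ℝ => (y+1) ^ ((3:ℝ) - d) :=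
    (measurable_id.add_const 1).pow_const _
  have hint2 : IntegrableOn (fun y => (y+1) ^ ((3:ℝ) - d)) (Ioo (0:ℝ) (3*R)) := by
    apply Integrable.mono' (integrable_const (1:ℝ)) hmes.aestronglyMeasurable
    filter_upwards [ae_restrict_mem measurableSet_Ioo] with y hy
    rw [Real.norm_eq_abs, abs_of_nonneg (Real.rpow_nonneg (by linarith [hy.1]) _)]
    exact hb1 y hy
  have hint1 : IntegrableOn (fun y => y ^ (d-1) * (y+1) ^ ((4:ℝ) - 2*d))
      (Ioo (0:ℝ) (3*R)) := by
    apply Integrable.mono' hint2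
    · exact ((measurable_id.pow_const _).mul
        ((measurable_id.add_const 1).pow_const _)).aestronglyMeasurable
    · filter_upwards [ae_restrict_mem measurableSet_Ioo] with y hy
      rw [Real.norm_eq_abs, abs_of_nonneg (mul_nonneg (pow_nonneg hy.1.le _)
        (Real.rpow_nonneg (by linarith [hy.1]) _))]
      exact hpt y hy
  have step1 : ∫ y in Ioo (0:ℝ) (3*R), y ^ (d-1) * (y+1) ^ ((4:ℝ) - 2*d)
      ≤ ∫ y in Ioo (0:ℝ) (3*R), (y+1) ^ ((3:ℝ) - d) :=
    setIntegral_mono_on hint1 hint2 measurableSet_Ioo hpt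
  refine step1.trans ?_
  -- now compute / bound the radial integral
  have hIoo : ∫ y in Ioo (0:ℝ) (3*R), (y+1) ^ ((3:ℝ) - d)
      = ∫ y in (0:ℝ)..(3*R), (y+1) ^ ((3:ℝ) - d) := by
    rw [intervalIntegral.integral_of_le (by linarith), integral_Ioc_eq_integral_Ioo]
  rw [hIoo]
  have hcomp : ∫ y in (0:ℝ)..(3*R), (y+1) ^ ((3:ℝ) - d)
      = ∫ x in (1:ℝ)..(3*R+1), x ^ ((3:ℝ) - d) := by
    have := intervalIntegral.integral_comp_add_right (a := (0:ℝ)) (b := 3*R)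
      (fun x => x ^ ((3:ℝ) - d)) 1
    simpa using this
  rcases eq_or_ne d 3 with h3 | h3
  · subst h3
    have hbet : bet 3 R = 3 * R := by simp [bet]
    rw [hbet]
    rw [hcomp]
    have he : ((3:ℝ) - ((3:ℕ):ℝ)) = 0 := by norm_num
    rw [he]
    simp only [Real.rpow_zero]
    rw [intervalIntegral.integral_const]
    simp
  rcases eq_or_ne d 4 with h4 | h4
  · subst h4
    have hbet : bet 4 R = 3 * Real.log R := by simp [bet]
    rw [hbet]
    rw [hcomp]
    have he : ∀ x : ℝ, x ^ ((3:ℝ) - ((4:ℕ):ℝ)) = x⁻¹ := by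
      intro x
      rw [show (3:ℝ) - ((4:ℕ):ℝ) = -1 by norm_num, Real.rpow_neg_one]
    simp only [he]
    rw [integral_inv (by
      rw [Set.uIcc_of_le (by linarith)]
      intro hx
      rw [Set.mem_Icc] at hx
      linarith [hx.1]), div_one]
    have h2 : (4:ℝ) ≤ R^2 := by nlinarith
    have h1 : 3*R+1 ≤ R^3 := by nlinarith [mul_le_mul_of_nonneg_left h2 hR0.le]
    calc Real.log (3*R+1) ≤ Real.log (R^3) := Real.log_le_log (by linarith) h1
      _ = 3 * Real.log R := by rw [Real.log_pow]; norm_num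
  · have hd5 : 5 ≤ d := by omega
    have hd5' : (5:ℝ) ≤ (d:ℝ) := by exact_mod_cast hd5
    have hbet : bet d R = 1 := by simp [bet, h3, h4]
    rw [hbet]
    rw [hcomp]
    have hne : (3:ℝ) - (d:ℝ) ≠ -1 := by
      intro h
      apply h4
      have : (d:ℝ) = 4 := by linarith
      exact_mod_cast this
    rw [integral_rpow (Or.inr ⟨hne, by
      rw [Set.uIcc_of_le (by linarith)]
      intro hx
      rw [Set.mem_Icc] at hx
      linarith [hx.1]⟩)]
    rw [Real.one_rpow]
    have ha1 : (3:ℝ) - (d:ℝ) + 1 < 0 := by linarith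
    have ht : (0:ℝ) ≤ (3*R+1) ^ ((3:ℝ) - (d:ℝ) + 1) := Real.rpow_nonneg (by linarith) _
    rw [div_le_iff_of_neg ha1]
    linarith


lemma bet_nonneg {R : ℝ} (hR : 2 ≤ R) : 0 ≤ bet d R := by
  unfold bet
  split_ifs
  · linarith
  · have := Real.log_nonneg (by linarith : (1:ℝ) ≤ R)
    linarith
  · norm_num

lemma gam_bound (hd : 3 ≤ d) {R : ℝ} (hR : 2 ≤ R) :
    R^2 * bet d R ≤ 3 * (Gam d R)^2 := by
  have hR0 : (0:ℝ) < R := by linarith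
  rcases eq_or_ne d 3 with h3 | h3
  · subst h3
    have h1 : Gam 3 R = R ^ ((3:ℝ)/2) := by simp [Gam]
    have h2 : (R ^ ((3:ℝ)/2))^2 = R^3 := by
      rw [← Real.rpow_natCast (R ^ ((3:ℝ)/2)) 2, ← Real.rpow_mul hR0.le,
        show (3:ℝ)/2 * ((2:ℕ):ℝ) = ((3:ℕ):ℝ) by norm_num, Real.rpow_natCast]
    have h3 : bet 3 R = 3 * R := by simp [bet]
    rw [h1, h2, h3]; ring_nf; rfl
  rcases eq_or_ne d 4 with h4 | h4
  · subst h4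
    have h1 : Gam 4 R = R * (Real.log R) ^ ((1:ℝ)/2) := by simp [Gam]
    have hlog : (0:ℝ) ≤ Real.log R := Real.log_nonneg (by linarith)
    have h2 : ((Real.log R) ^ ((1:ℝ)/2))^2 = Real.log R := by
      rw [← Real.rpow_natCast ((Real.log R) ^ ((1:ℝ)/2)) 2, ← Real.rpow_mul hlog]
      norm_num
    have h3 : bet 4 R = 3 * Real.log R := by simp [bet]
    rw [h1, h3, mul_pow, h2]; ring_nf; rfl
  · have h1 : Gam d R = R := by simp [Gam, h3, h4]
    have h2 : bet d R = 1 := by simp [bet, h3, h4]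
    rw [h1, h2]
    nlinarith [sq_nonneg R]

end Stmt6Aux

open Stmt6Aux in
/-- `∫_{𝔹_{2R}} |∫_{𝔹_R} (|x+y|+1)^{2-d} (|x|+1)^{1-d} dx|² dy ≤ C Γ(R)²`. -/
theorem stmt_6 (d : ℕ) (hd : 3 ≤ d) (c : ℝ) (hc : 0 < c) :
    ∃ C : ℝ, 0 < C ∧ ∀ R : ℝ, 2 ≤ R →
      ∫ y in Metric.ball (0 : EuclideanSpace ℝ (Fin d)) (2 * R),
          |∫ x in Metric.ball (0 : EuclideanSpace ℝ (Fin d)) R,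
              (‖x + y‖ + 1) ^ ((2 : ℝ) - d) * (‖x‖ + 1) ^ ((1 : ℝ) - d)| ^ 2
        ≤ C * (Gam d R) ^ 2 := by
  classical
  set E := EuclideanSpace ℝ (Fin d)
  have hkap : 0 < kap d := kap_pos d (by omega)
  refine ⟨3 * kap d ^ 3, by positivity, ?_⟩
  intro R hR
  have hR0 : (0:ℝ) < R := by linarith
  have hd1 : (1:ℝ) ≤ (d:ℝ) := by exact_mod_cast (by omega : 1 ≤ d)
  have hd3 : (3:ℝ) ≤ (d:ℝ) := by exact_mod_cast hd
  -- abbreviations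
  set f : E → ℝ := fun z => (‖z‖ + 1) ^ ((2:ℝ) - d) with hf_def
  set g : E → ℝ := fun x => (‖x‖ + 1) ^ ((1:ℝ) - d) with hg_def
  have hbase : ∀ z : E, (0:ℝ) < ‖z‖ + 1 := fun z => by positivity
  have hf0 : ∀ z, 0 ≤ f z := fun z => Real.rpow_nonneg (hbase z).le _
  have hg0 : ∀ z, 0 ≤ g z := fun z => Real.rpow_nonneg (hbase z).le _
  have hf1 : ∀ z, f z ≤ 1 := fun z =>
    Real.rpow_le_one_of_one_le_of_nonpos (by linarith [norm_nonneg z]) (by linarith)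
  have hg1 : ∀ z, g z ≤ 1 := fun z =>
    Real.rpow_le_one_of_one_le_of_nonpos (by linarith [norm_nonneg z]) (by linarith)
  have hfc : Continuous f :=
    (continuous_norm.add continuous_const).rpow_const (fun z => Or.inl (hbase z).ne')
  have hgc : Continuous g :=
    (continuous_norm.add continuous_const).rpow_const (fun z => Or.inl (hbase z).ne')
  haveI hfin1 : IsFiniteMeasure (volume.restrict (Metric.ball (0:E) R)) :=
    ⟨by rw [Measure.restrict_apply_univ]; exact measure_ball_lt_top⟩
  haveI hfin2 : IsFiniteMeasure (volume.restrict (Metric.ball (0:E) (2*R))) :=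
    ⟨by rw [Measure.restrict_apply_univ]; exact measure_ball_lt_top⟩
  -- quantities
  set A : ℝ := ∫ x in Metric.ball (0:E) R, g x with hA_def
  set B : ℝ := ∫ z in Metric.ball (0:E) (3*R), (‖z‖ + 1) ^ ((4:ℝ) - 2*d) with hB_def
  set W : E → ℝ := fun y => ∫ x in Metric.ball (0:E) R, f (x + y)^2 * g x with hW_def
  have hA0 : 0 ≤ A := setIntegral_nonneg measurableSet_ball fun x _ => hg0 x
  have hB0 : 0 ≤ B := setIntegral_nonneg measurableSet_ball fun x _ =>
    Real.rpow_nonneg (hbase x).le _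
  have hA_le : A ≤ kap d * R := boundA d hd hR0
  have hB_le : B ≤ kap d * bet d R := boundB d hd hR
  have hW0 : ∀ y, 0 ≤ W y := fun y => setIntegral_nonneg measurableSet_ball fun x _ =>
    mul_nonneg (sq_nonneg _) (hg0 x)
  have hf2 : ∀ z : E, f z ^ 2 = (‖z‖ + 1) ^ ((4:ℝ) - 2*d) := by
    intro z
    rw [hf_def, sq, ← Real.rpow_add (hbase z)]
    congr 1; ring
  -- integrability of g on the ball
  have hgint : IntegrableOn g (Metric.ball (0:E) R) := by
    apply Integrable.mono' (integrable_const (1:ℝ)) hgc.aestronglyMeasurable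
    exact ae_of_all _ fun x => by
      rw [Real.norm_eq_abs, abs_of_nonneg (hg0 x)]; exact hg1 x
  -- Step 1 : Cauchy-Schwarz pointwise in y
  have claim1 : ∀ y : E,
      (∫ x in Metric.ball (0:E) R, f (x + y) * g x) ^ 2 ≤ A * W y := by
    intro y
    set u : E → ℝ := fun x => (‖x‖ + 1) ^ (((1:ℝ) - d)/2) with hu_def
    set v : E → ℝ := fun x => f (x + y) * u x with hv_def
    have hu0 : ∀ x, 0 ≤ u x := fun x => Real.rpow_nonneg (hbase x).le _
    have hv0 : ∀ x, 0 ≤ v x := fun x => mul_nonneg (hf0 _) (hu0 x)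
    have hu1 : ∀ x, u x ≤ 1 := fun x =>
      Real.rpow_le_one_of_one_le_of_nonpos (by linarith [norm_nonneg x]) (by linarith)
    have huu : ∀ x, u x * u x = g x := by
      intro x
      rw [hu_def, hg_def, ← Real.rpow_add (hbase x)]
      congr 1; ring
    have huc : Continuous u :=
      (continuous_norm.add continuous_const).rpow_const (fun z => Or.inl (hbase z).ne')
    have hvc : Continuous v := ((hfc.comp (continuous_id.add continuous_const)).mul huc)
    have hu_mem : MemLp u (ENNReal.ofReal 2) (volume.restrict (Metric.ball (0:E) R)) :=
      MemLp.of_bound huc.aestronglyMeasurable 1 (ae_of_all _ fun x => by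
        rw [Real.norm_eq_abs, abs_of_nonneg (hu0 x)]; exact hu1 x)
    have hv_mem : MemLp v (ENNReal.ofReal 2) (volume.restrict (Metric.ball (0:E) R)) :=
      MemLp.of_bound hvc.aestronglyMeasurable 1 (ae_of_all _ fun x => by
        rw [Real.norm_eq_abs, abs_of_nonneg (hv0 x)]
        calc f (x + y) * u x ≤ 1 * 1 :=
          mul_le_mul (hf1 _) (hu1 x) (hu0 x) zero_le_one
        _ = 1 := by norm_num)
    have hconj : Real.HolderConjugate 2 2 := Real.HolderConjugate.two_two
    have hH := integral_mul_le_Lp_mul_Lq_of_nonneg hconj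
      (ae_of_all _ hu0) (ae_of_all _ hv0) hu_mem hv_mem
    have hI_eq : ∫ x in Metric.ball (0:E) R, f (x + y) * g x
        = ∫ x in Metric.ball (0:E) R, u x * v x := by
      apply setIntegral_congr_fun measurableSet_ball
      intro x _
      rw [hv_def]
      calc f (x + y) * g x = f (x + y) * (u x * u x) := by rw [huu]
        _ = u x * (f (x + y) * u x) := by ring
    have hsq : ∀ t : ℝ, 0 ≤ t → t ^ (2:ℝ) = t * t := fun t ht => by
      rw [show (2:ℝ) = ((2:ℕ):ℝ) by norm_num, Real.rpow_natCast]; ring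
    have hu2 : ∫ x in Metric.ball (0:E) R, u x ^ (2:ℝ) = A := by
      rw [hA_def]
      apply setIntegral_congr_fun measurableSet_ball
      intro x _
      show u x ^ (2:ℝ) = g x
      rw [hsq _ (hu0 x), huu]
    have hv2 : ∫ x in Metric.ball (0:E) R, v x ^ (2:ℝ) = W y := by
      rw [hW_def]
      apply setIntegral_congr_fun measurableSet_ball
      intro x _
      show v x ^ (2:ℝ) = f (x + y) ^ 2 * g x
      rw [hsq _ (hv0 x), hv_def]
      calc f (x + y) * u x * (f (x + y) * u x)
          = f (x + y) ^ 2 * (u x * u x) := by ring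
        _ = f (x + y) ^ 2 * g x := by rw [huu]
    rw [hI_eq]
    have hnn : 0 ≤ ∫ x in Metric.ball (0:E) R, u x * v x :=
      setIntegral_nonneg measurableSet_ball fun x _ => mul_nonneg (hu0 x) (hv0 x)
    have h2 := pow_le_pow_left₀ hnn hH 2
    refine h2.trans (le_of_eq ?_)
    rw [hu2, hv2] at *
    rw [mul_pow]
    have hpow : ∀ t : ℝ, 0 ≤ t → (t ^ ((1:ℝ)/2))^2 = t := fun t ht => by
      rw [← Real.rpow_natCast (t ^ ((1:ℝ)/2)) 2, ← Real.rpow_mul ht]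
      norm_num
    rw [hpow _ hA0, hpow _ (hW0 y)]
  -- translation bound
  have htrans : ∀ x : E, x ∈ Metric.ball (0:E) R →
      (∫ y in Metric.ball (0:E) (2*R), f (x + y)^2) ≤ B := by
    intro x hx
    have hx' : ‖x‖ < R := mem_ball_zero_iff.1 hx
    have hmp : MeasurePreserving (fun y : E => x + y) volume volume :=
      measurePreserving_add_left volume x
    have hemb : MeasurableEmbedding (fun y : E => x + y) :=
      (MeasurableEquiv.addLeft x).measurableEmbedding
    have hpre : (fun y : E => x + y) ⁻¹' (Metric.ball x (2*R)) = Metric.ball (0:E) (2*R) := by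
      ext y
      simp only [Set.mem_preimage, Metric.mem_ball, mem_ball_zero_iff]
      rw [dist_eq_norm]
      simp
    have h1 : ∫ y in Metric.ball (0:E) (2*R), (‖x + y‖ + 1) ^ ((4:ℝ) - 2*d)
        = ∫ z in Metric.ball x (2*R), (‖z‖ + 1) ^ ((4:ℝ) - 2*d) := by
      rw [← hpre]
      exact hmp.setIntegral_preimage_emb hemb (fun z : E => (‖z‖ + 1) ^ ((4:ℝ) - 2*d)) (Metric.ball x (2*R))
    have hsub : Metric.ball x (2*R) ⊆ Metric.ball (0:E) (3*R) := by
      intro z hz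
      rw [Metric.mem_ball] at hz ⊢
      calc dist z 0 ≤ dist z x + dist x 0 := dist_triangle _ _ _
        _ < 2*R + R := by
            rw [dist_zero_right]
            exact add_lt_add hz hx'
        _ = 3*R := by ring
    have hint3 : IntegrableOn (fun z : E => (‖z‖ + 1) ^ ((4:ℝ) - 2*d))
        (Metric.ball (0:E) (3*R)) := by
      haveI : IsFiniteMeasure (volume.restrict (Metric.ball (0:E) (3*R))) :=
        ⟨by rw [Measure.restrict_apply_univ]; exact measure_ball_lt_top⟩
      apply Integrable.mono' (integrable_const (1:ℝ))
        ((continuous_norm.add continuous_const).rpow_const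
          (fun z => Or.inl (hbase z).ne')).aestronglyMeasurable
      exact ae_of_all _ fun z => by
        simp only [Real.norm_eq_abs, Pi.add_apply]
        rw [abs_of_nonneg (Real.rpow_nonneg (hbase z).le _)]
        exact Real.rpow_le_one_of_one_le_of_nonpos (by linarith [norm_nonneg z]) (by linarith)
    calc (∫ y in Metric.ball (0:E) (2*R), f (x + y)^2)
        = ∫ y in Metric.ball (0:E) (2*R), (‖x + y‖ + 1) ^ ((4:ℝ) - 2*d) := by
          apply setIntegral_congr_fun measurableSet_ball
          intro y _
          show f (x + y)^2 = (‖x + y‖ + 1) ^ ((4:ℝ) - 2*d)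
          exact hf2 (x + y)
      _ = ∫ z in Metric.ball x (2*R), (‖z‖ + 1) ^ ((4:ℝ) - 2*d) := h1
      _ ≤ B := by
          rw [hB_def]
          apply setIntegral_mono_set hint3
            (ae_of_all _ fun z => Real.rpow_nonneg (hbase z).le _)
            hsub.eventuallyLE
  -- product integrability
  have hProd : Integrable (Function.uncurry fun y x : E => f (x + y)^2 * g x)
      ((volume.restrict (Metric.ball (0:E) (2*R))).prod
        (volume.restrict (Metric.ball (0:E) R))) := by
    have hPc : Continuous (fun p : E × E => f (p.2 + p.1)^2 * g p.2) :=
      (((hfc.comp (continuous_snd.add continuous_fst)).pow 2).mul (hgc.comp continuous_snd))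
    apply Integrable.mono' (integrable_const (1:ℝ)) hPc.aestronglyMeasurable
    exact ae_of_all _ fun p => by
      have h1 : f (p.2 + p.1)^2 ≤ 1 := by
        calc f (p.2 + p.1)^2 ≤ 1^2 := pow_le_pow_left₀ (hf0 _) (hf1 _) 2
          _ = 1 := one_pow 2
      rw [Real.norm_eq_abs, abs_of_nonneg (mul_nonneg (sq_nonneg _) (hg0 _))]
      calc f (p.2 + p.1)^2 * g p.2 ≤ 1 * 1 :=
        mul_le_mul h1 (hg1 _) (hg0 _) zero_le_one
      _ = 1 := by norm_num
  have hWint : Integrable W (volume.restrict (Metric.ball (0:E) (2*R))) := by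
    rw [hW_def]
    exact hProd.integral_prod_left
  -- main chain
  have step0 : ∫ y in Metric.ball (0:E) (2*R),
      |∫ x in Metric.ball (0:E) R, (‖x + y‖ + 1) ^ ((2:ℝ) - d) * (‖x‖ + 1) ^ ((1:ℝ) - d)| ^ 2
      = ∫ y in Metric.ball (0:E) (2*R),
        (∫ x in Metric.ball (0:E) R, f (x + y) * g x) ^ 2 := by
    simp only [sq_abs]
    rfl
  have step1 : ∫ y in Metric.ball (0:E) (2*R),
      (∫ x in Metric.ball (0:E) R, f (x + y) * g x) ^ 2
      ≤ ∫ y in Metric.ball (0:E) (2*R), A * W y := by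
    apply integral_mono_of_nonneg (ae_of_all _ fun y => sq_nonneg _)
      (hWint.const_mul A) (ae_of_all _ fun y => claim1 y)
  have step2 : ∫ y in Metric.ball (0:E) (2*R), A * W y
      = A * ∫ y in Metric.ball (0:E) (2*R), W y := integral_const_mul A W
  have step3 : ∫ y in Metric.ball (0:E) (2*R), W y
      = ∫ x in Metric.ball (0:E) R, (∫ y in Metric.ball (0:E) (2*R), f (x + y)^2) * g x := by
    rw [hW_def]
    rw [integral_integral_swap hProd]
    apply setIntegral_congr_fun measurableSet_ball
    intro x _
    exact integral_mul_const (g x) _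
  have step4 : ∫ x in Metric.ball (0:E) R,
      (∫ y in Metric.ball (0:E) (2*R), f (x + y)^2) * g x
      ≤ ∫ x in Metric.ball (0:E) R, B * g x := by
    apply integral_mono_of_nonneg
    · exact ae_of_all _ fun x => mul_nonneg
        (setIntegral_nonneg measurableSet_ball fun y _ => sq_nonneg _) (hg0 x)
    · exact hgint.const_mul B
    · filter_upwards [ae_restrict_mem measurableSet_ball] with x hx
      exact mul_le_mul_of_nonneg_right (htrans x hx) (hg0 x)
  have step5 : ∫ x in Metric.ball (0:E) R, B * g x = B * A := integral_const_mul B g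
  have hfinal : ∫ y in Metric.ball (0:E) (2*R),
      |∫ x in Metric.ball (0:E) R, (‖x + y‖ + 1) ^ ((2:ℝ) - d) * (‖x‖ + 1) ^ ((1:ℝ) - d)| ^ 2
      ≤ A * (B * A) := by
    rw [step0]
    refine step1.trans ?_
    rw [step2]
    apply mul_le_mul_of_nonneg_left _ hA0
    rw [step3]
    exact step4.trans (le_of_eq step5)
  refine hfinal.trans ?_
  have hbR : 0 ≤ kap d * R := mul_nonneg hkap.le hR0.le
  have hbB : 0 ≤ kap d * bet d R := mul_nonneg hkap.le (bet_nonneg d hR)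
  have h6 : A * (B * A) ≤ (kap d * R) * ((kap d * bet d R) * (kap d * R)) := by
    apply mul_le_mul hA_le _ (mul_nonneg hB0 hA0) hbR
    exact mul_le_mul hB_le hA_le hA0 hbB
  refine h6.trans ?_
  have h7 : (kap d * R) * ((kap d * bet d R) * (kap d * R))
      = kap d ^ 3 * (R^2 * bet d R) := by ring
  rw [h7]
  have h8 := gam_bound d hd hR
  calc kap d ^ 3 * (R^2 * bet d R) ≤ kap d ^ 3 * (3 * (Gam d R)^2) :=
        mul_le_mul_of_nonneg_left h8 (by positivity)
    _ = 3 * kap d ^ 3 * (Gam d R)^2 := by ring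
end

section
/- Let $d\ge 3$ and $c>0$. There exists $C=C(d,c)$ such that for all $R\ge 1$: $\int_{\mathbb{R}^d\setminus\mathbb{B}_{R/2}}\Big|\int_{\mathbb{R}^d\setminus\mathbb{B}_R} R^{1-d} e^{-c(|x+y|+|x|)/R}(|x+y|+1)^{2-d}\,dx\Big|^2 dy \le C R^2 \int_0^\infty e^{-2cr/R}(r+1)^{4-2d} r^{d-1}\,dr$, and the right-hand side is bounded by $C'\Gamma(R)^2$ with $\Gamma$ as defined by $\Gamma(R)=R^{3/2}$ ($d=3$), $R(\log R)^{1/2}$ ($d=4$), $R$ ($d\ge 5$). -/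
open MeasureTheory Real Set

lemma oneDim_integrable (b q : ℝ) (hb : 0 < b) (hq : -1 < q) :
    IntegrableOn (fun r : ℝ => r ^ q * Real.exp (-b * r)) (Set.Ioi 0) := by
  have := integrableOn_rpow_mul_exp_neg_mul_rpow hq one_pos hb
  refine this.congr_fun (fun x hx => by simp [Real.rpow_one]) measurableSet_Ioi

lemma oneDim_value (b q : ℝ) (hb : 0 < b) (hq : -1 < q) :
    ∫ r in Set.Ioi (0:ℝ), r ^ q * Real.exp (-b * r) = b ^ (-(q+1)) * Real.Gamma (q+1) := by
  rw [setIntegral_congr_fun measurableSet_Ioi (g := fun x => x ^ q * Real.exp (-b * x ^ (1:ℝ)))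
    (fun x hx => by simp [Real.rpow_one]),
    integral_rpow_mul_exp_neg_mul_rpow one_pos hq hb]
  simp

lemma exp_mul_integrable (a : ℝ) (ha : 0 < a) :
    IntegrableOn (fun r : ℝ => Real.exp (-a*r) * (r+1)) (Set.Ioi 0) := by
  have h : (fun r : ℝ => Real.exp (-a*r) * (r+1))
      = fun r => r^(1:ℝ)*Real.exp (-a*r) + r^(0:ℝ)*Real.exp (-a*r) := by
    funext r; rw [Real.rpow_one, Real.rpow_zero]; ring
  rw [h]
  exact (oneDim_integrable a 1 ha (by norm_num)).add (oneDim_integrable a 0 ha (by norm_num))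

lemma exp_mul_value (a : ℝ) (ha : 0 < a) :
    ∫ r in Set.Ioi (0:ℝ), Real.exp (-a*r) * (r+1) = 1/a^2 + 1/a := by
  have h : (fun r : ℝ => Real.exp (-a*r) * (r+1))
      = fun r => r^(1:ℝ)*Real.exp (-a*r) + r^(0:ℝ)*Real.exp (-a*r) := by
    funext r; rw [Real.rpow_one, Real.rpow_zero]; ring
  rw [h, integral_add (oneDim_integrable a 1 ha (by norm_num))
      (oneDim_integrable a 0 ha (by norm_num)),
    oneDim_value a 1 ha (by norm_num), oneDim_value a 0 ha (by norm_num)]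
  norm_num [Real.Gamma_two, Real.Gamma_one, Real.rpow_neg ha.le, Real.rpow_two,
    Real.rpow_one]

lemma radial (d : ℕ) (hd : 3 ≤ d) (f : ℝ → ℝ) :
    ∫ x : EuclideanSpace ℝ (Fin d), f ‖x‖
      = (d * (volume (Metric.ball (0 : EuclideanSpace ℝ (Fin d)) 1)).toReal)
        * ∫ r in Set.Ioi (0:ℝ), r ^ ((d:ℝ)-1) * f r := by
  haveI : Nontrivial (EuclideanSpace ℝ (Fin d)) := by
    apply Module.nontrivial_of_finrank_pos (R := ℝ)
    rw [finrank_euclideanSpace_fin]; omega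
  rw [MeasureTheory.integral_fun_norm_addHaar volume f, finrank_euclideanSpace_fin]
  have h : ∫ r in Set.Ioi (0:ℝ), r ^ (d - 1) • f r
      = ∫ r in Set.Ioi (0:ℝ), r ^ ((d:ℝ)-1) * f r := by
    apply setIntegral_congr_fun measurableSet_Ioi
    intro r hr
    simp only [smul_eq_mul]
    rw [← Real.rpow_natCast r (d-1), Nat.cast_sub (by omega), Nat.cast_one]
  rw [nsmul_eq_mul, smul_eq_mul, h, mul_assoc]; rfl

lemma ball_vol_pos (d : ℕ) (hd : 3 ≤ d) :
    0 < (volume (Metric.ball (0 : EuclideanSpace ℝ (Fin d)) 1)).toReal := by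
  refine ENNReal.toReal_pos (ne_of_gt (Metric.measure_ball_pos _ _ one_pos)) ?_
  exact (measure_ball_lt_top).ne

lemma expE_value (d : ℕ) (hd : 3 ≤ d) (a : ℝ) (ha : 0 < a) :
    ∫ y : EuclideanSpace ℝ (Fin d), Real.exp (-a*‖y‖)
      = (d * (volume (Metric.ball (0 : EuclideanSpace ℝ (Fin d)) 1)).toReal)
        * (a ^ (-(d:ℝ)) * Real.Gamma d) := by
  rw [radial d hd (fun r => Real.exp (-a*r))]
  congr 1
  have h := oneDim_value a ((d:ℝ)-1) ha (by
    have : (3:ℝ) ≤ d := by exact_mod_cast hd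
    linarith)
  rw [h]
  norm_num

lemma intE (d : ℕ) (hd : 3 ≤ d) (a s : ℝ) (ha : 0 < a) (hs : s ≤ 0) :
    Integrable (fun z : EuclideanSpace ℝ (Fin d) => Real.exp (-a * ‖z‖) * (‖z‖ + 1) ^ s) := by
  have key : Integrable (fun z : EuclideanSpace ℝ (Fin d) => (1 + ‖z‖) ^ (-((d:ℝ)+1))) := by
    apply integrable_one_add_norm
    rw [finrank_euclideanSpace_fin]; linarith
  apply Integrable.mono' (key.const_mul (Real.exp a * (d+1).factorial / a^(d+1)))
  · apply Measurable.aestronglyMeasurable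
    fun_prop (disch := intro x; positivity)
  · filter_upwards with z
    have h0 : (0:ℝ) ≤ ‖z‖ := norm_nonneg z
    rw [Real.norm_of_nonneg (by positivity)]
    have h1 : (‖z‖ + 1) ^ s ≤ 1 :=
      Real.rpow_le_one_of_one_le_of_nonpos (by linarith) hs
    have h2 : Real.exp (-a * ‖z‖) ≤ Real.exp a * (d+1).factorial / a^(d+1) * (1 + ‖z‖) ^ (-((d:ℝ)+1)) := by
      rw [show (-((d:ℝ)+1)) = -((d+1 : ℕ):ℝ) by push_cast; ring, Real.rpow_neg (by linarith),
        Real.rpow_natCast]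
      have hp := Real.pow_div_factorial_le_exp (x := a*(1+‖z‖)) (by positivity) (d+1)
      have key2 : a^(d+1) * (1+‖z‖)^(d+1) ≤ (d+1).factorial * (Real.exp a * Real.exp (a*‖z‖)) := by
        rw [← Real.exp_add]
        have := (div_le_iff₀ (by positivity : (0:ℝ) < ((d+1).factorial : ℝ))).mp hp
        calc a^(d+1) * (1+‖z‖)^(d+1) = (a*(1+‖z‖))^(d+1) := by rw [mul_pow]
          _ ≤ Real.exp (a*(1+‖z‖)) * (d+1).factorial := this
          _ = _ := by rw [mul_comm]; congr 1; ring
      have hE : (0:ℝ) < Real.exp (a*‖z‖) := Real.exp_pos _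
      have hT : (0:ℝ) < (1+‖z‖)^(d+1) := by positivity
      rw [show Real.exp (-a*‖z‖) = 1 / Real.exp (a*‖z‖) by
            rw [one_div, ← Real.exp_neg]; ring_nf,
        show Real.exp a * ((d+1).factorial : ℝ) / a^(d+1) * ((1+‖z‖)^(d+1))⁻¹
           = (Real.exp a * ((d+1).factorial : ℝ) / a^(d+1)) / ((1+‖z‖)^(d+1)) by
            ring,
        div_le_div_iff₀ hE hT]
      calc 1 * (1+‖z‖)^(d+1) = (1+‖z‖)^(d+1) := one_mul _
        _ ≤ ((d+1).factorial * (Real.exp a * Real.exp (a*‖z‖))) / a^(d+1) := by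
            rw [le_div_iff₀ (by positivity)]; linarith [key2]
        _ = Real.exp a * ((d+1).factorial : ℝ) / a^(d+1) * Real.exp (a*‖z‖) := by ring
    calc Real.exp (-a * ‖z‖) * (‖z‖ + 1) ^ s ≤ Real.exp (-a * ‖z‖) * 1 :=
          mul_le_mul_of_nonneg_left h1 (Real.exp_pos _).le
      _ = Real.exp (-a * ‖z‖) := mul_one _
      _ ≤ _ := h2

lemma expE_integrable (d : ℕ) (hd : 3 ≤ d) (a : ℝ) (ha : 0 < a) :
    Integrable (fun z : EuclideanSpace ℝ (Fin d) => Real.exp (-a * ‖z‖)) := by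
  have := intE d hd a 0 ha le_rfl
  simpa using this

lemma hd3 (d : ℕ) (hd : 3 ≤ d) : (3:ℝ) ≤ (d:ℝ) := by exact_mod_cast hd

lemma inner_nonneg (d : ℕ) (c R : ℝ) (hR0 : 0 < R) (y : EuclideanSpace ℝ (Fin d)) :
    0 ≤ ∫ x in (Metric.ball (0 : EuclideanSpace ℝ (Fin d)) R)ᶜ,
        R ^ ((1 : ℝ) - d) * Real.exp (-c * (‖x + y‖ + ‖x‖) / R) * (‖x + y‖ + 1) ^ ((2 : ℝ) - d) := by
  apply setIntegral_nonneg (measurableSet_ball.compl)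
  intro x _
  have h1 : (0:ℝ) ≤ ‖x + y‖ := norm_nonneg _
  positivity

lemma inner_bound (d : ℕ) (hd : 3 ≤ d) (c : ℝ) (hc : 0 < c) (R : ℝ) (hR : 2 ≤ R)
    (y : EuclideanSpace ℝ (Fin d)) :
    (∫ x in (Metric.ball (0 : EuclideanSpace ℝ (Fin d)) R)ᶜ,
        R ^ ((1 : ℝ) - d) * Real.exp (-c * (‖x + y‖ + ‖x‖) / R) * (‖x + y‖ + 1) ^ ((2 : ℝ) - d))
      ≤ ((d * (volume (Metric.ball (0 : EuclideanSpace ℝ (Fin d)) 1)).toReal) * (4/c^2 + 2/c))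
          * R ^ ((3:ℝ) - d) * Real.exp (-c * ‖y‖ / (2*R)) := by
  have hR0 : (0:ℝ) < R := by linarith
  have hdr : (3:ℝ) ≤ (d:ℝ) := hd3 d hd
  have ha : 0 < c/(2*R) := by positivity
  have hs : (2:ℝ) - d ≤ 0 := by linarith
  -- the dominating function
  have hIh : Integrable (fun z : EuclideanSpace ℝ (Fin d) =>
      Real.exp (-(c/(2*R)) * ‖z‖) * (‖z‖ + 1) ^ ((2:ℝ)-d)) := intE d hd _ _ ha hs
  have hIg : Integrable (fun x : EuclideanSpace ℝ (Fin d) =>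
      Real.exp (-(c/(2*R)) * ‖x + y‖) * (‖x + y‖ + 1) ^ ((2:ℝ)-d)) := hIh.comp_add_right y
  have hIG : Integrable (fun x : EuclideanSpace ℝ (Fin d) =>
      (R ^ ((1:ℝ) - d) * Real.exp (-c * ‖y‖ / (2*R))) *
        (Real.exp (-(c/(2*R)) * ‖x + y‖) * (‖x + y‖ + 1) ^ ((2:ℝ)-d))) :=
    hIg.const_mul _
  have step1 : (∫ x in (Metric.ball (0 : EuclideanSpace ℝ (Fin d)) R)ᶜ,
        R ^ ((1 : ℝ) - d) * Real.exp (-c * (‖x + y‖ + ‖x‖) / R) * (‖x + y‖ + 1) ^ ((2 : ℝ) - d))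
      ≤ ∫ x in (Metric.ball (0 : EuclideanSpace ℝ (Fin d)) R)ᶜ,
          (R ^ ((1:ℝ) - d) * Real.exp (-c * ‖y‖ / (2*R))) *
            (Real.exp (-(c/(2*R)) * ‖x + y‖) * (‖x + y‖ + 1) ^ ((2:ℝ)-d)) := by
    apply integral_mono_of_nonneg
    · filter_upwards with x
      have h1 : (0:ℝ) ≤ ‖x + y‖ := norm_nonneg _
      positivity
    · exact hIG.restrict
    · filter_upwards with x
      have h1 : (0:ℝ) ≤ ‖x + y‖ := norm_nonneg _
      have h0 : (0:ℝ) ≤ ‖x‖ := norm_nonneg _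
      have htri : ‖y‖ ≤ ‖x + y‖ + ‖x‖ := by
        calc ‖y‖ = ‖(x + y) - x‖ := by congr 1; abel
          _ ≤ ‖x + y‖ + ‖x‖ := norm_sub_le _ _
      have hexp : Real.exp (-c * (‖x + y‖ + ‖x‖) / R)
          ≤ Real.exp (-c * ‖y‖ / (2*R)) * Real.exp (-(c/(2*R)) * ‖x + y‖) := by
        rw [← Real.exp_add]
        apply Real.exp_le_exp.mpr
        have h3 : c*(‖y‖+‖x+y‖)/(2*R) ≤ c*(‖x+y‖+‖x‖)/R := by
          rw [div_le_div_iff₀ (by positivity) hR0]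
          have hcr : (0:ℝ) ≤ c * R := by positivity
          have k1 : c * R * ‖y‖ ≤ c * R * (‖x + y‖ + ‖x‖) :=
            mul_le_mul_of_nonneg_left htri hcr
          have k2 : (0:ℝ) ≤ c * R * ‖x‖ := by positivity
          nlinarith [k1, k2]
        have e1 : -c * (‖x+y‖+‖x‖) / R = -(c*(‖x+y‖+‖x‖)/R) := by ring
        have e2 : -c*‖y‖/(2*R) + -(c/(2*R))*‖x+y‖ = -(c*(‖y‖+‖x+y‖)/(2*R)) := by ring
        rw [e1, e2]
        exact neg_le_neg h3
      calc R ^ ((1 : ℝ) - d) * Real.exp (-c * (‖x + y‖ + ‖x‖) / R) * (‖x + y‖ + 1) ^ ((2 : ℝ) - d)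
          ≤ R ^ ((1 : ℝ) - d) * (Real.exp (-c * ‖y‖ / (2*R)) * Real.exp (-(c/(2*R)) * ‖x + y‖))
              * (‖x + y‖ + 1) ^ ((2 : ℝ) - d) := by
            apply mul_le_mul_of_nonneg_right (mul_le_mul_of_nonneg_left hexp (by positivity))
            positivity
        _ = (R ^ ((1:ℝ) - d) * Real.exp (-c * ‖y‖ / (2*R))) *
              (Real.exp (-(c/(2*R)) * ‖x + y‖) * (‖x + y‖ + 1) ^ ((2:ℝ)-d)) := by ring
  have step2 : (∫ x in (Metric.ball (0 : EuclideanSpace ℝ (Fin d)) R)ᶜ,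
          (R ^ ((1:ℝ) - d) * Real.exp (-c * ‖y‖ / (2*R))) *
            (Real.exp (-(c/(2*R)) * ‖x + y‖) * (‖x + y‖ + 1) ^ ((2:ℝ)-d)))
      ≤ ∫ x : EuclideanSpace ℝ (Fin d),
          (R ^ ((1:ℝ) - d) * Real.exp (-c * ‖y‖ / (2*R))) *
            (Real.exp (-(c/(2*R)) * ‖x + y‖) * (‖x + y‖ + 1) ^ ((2:ℝ)-d)) := by
    apply setIntegral_le_integral hIG
    filter_upwards with x
    have h1 : (0:ℝ) ≤ ‖x + y‖ := norm_nonneg _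
    positivity
  have step3 : (∫ x : EuclideanSpace ℝ (Fin d),
          (R ^ ((1:ℝ) - d) * Real.exp (-c * ‖y‖ / (2*R))) *
            (Real.exp (-(c/(2*R)) * ‖x + y‖) * (‖x + y‖ + 1) ^ ((2:ℝ)-d)))
      = (R ^ ((1:ℝ) - d) * Real.exp (-c * ‖y‖ / (2*R))) *
          ∫ z : EuclideanSpace ℝ (Fin d),
            Real.exp (-(c/(2*R)) * ‖z‖) * (‖z‖ + 1) ^ ((2:ℝ)-d) := by
    rw [integral_const_mul]
    congr 1
    exact integral_add_right_eq_self
      (fun z : EuclideanSpace ℝ (Fin d) => Real.exp (-(c/(2*R)) * ‖z‖) * (‖z‖ + 1) ^ ((2:ℝ)-d)) y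
  have step4 : (∫ z : EuclideanSpace ℝ (Fin d),
          Real.exp (-(c/(2*R)) * ‖z‖) * (‖z‖ + 1) ^ ((2:ℝ)-d))
      = (d * (volume (Metric.ball (0 : EuclideanSpace ℝ (Fin d)) 1)).toReal)
        * ∫ r in Set.Ioi (0:ℝ), r ^ ((d:ℝ)-1) *
            (Real.exp (-(c/(2*R)) * r) * (r + 1) ^ ((2:ℝ)-d)) :=
    radial d hd (fun r => Real.exp (-(c/(2*R)) * r) * (r + 1) ^ ((2:ℝ)-d))
  have step5 : (∫ r in Set.Ioi (0:ℝ), r ^ ((d:ℝ)-1) *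
          (Real.exp (-(c/(2*R)) * r) * (r + 1) ^ ((2:ℝ)-d)))
      ≤ ∫ r in Set.Ioi (0:ℝ), Real.exp (-(c/(2*R)) * r) * (r + 1) := by
    apply setIntegral_mono_on ?_ (exp_mul_integrable _ ha) measurableSet_Ioi
    · intro r hr
      replace hr : 0 < r := hr
      have key : r ^ ((d:ℝ)-1) * (r + 1) ^ ((2:ℝ)-d) ≤ r + 1 := by
        calc r ^ ((d:ℝ)-1) * (r + 1) ^ ((2:ℝ)-d)
            ≤ (r+1) ^ ((d:ℝ)-1) * (r + 1) ^ ((2:ℝ)-d) := by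
              apply mul_le_mul_of_nonneg_right
                (Real.rpow_le_rpow hr.le (by linarith) (by linarith))
              positivity
          _ = (r+1) ^ ((d:ℝ)-1+((2:ℝ)-d)) := by
              rw [← Real.rpow_add (by linarith)]
          _ = r + 1 := by norm_num
      calc r ^ ((d:ℝ)-1) * (Real.exp (-(c/(2*R)) * r) * (r + 1) ^ ((2:ℝ)-d))
          = Real.exp (-(c/(2*R)) * r) * (r ^ ((d:ℝ)-1) * (r + 1) ^ ((2:ℝ)-d)) := by ring
        _ ≤ Real.exp (-(c/(2*R)) * r) * (r + 1) :=
            mul_le_mul_of_nonneg_left key (Real.exp_pos _).le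
    · -- integrability of LHS
      apply ((exp_mul_integrable _ ha).mono' ?_ ?_)
      · apply (ContinuousOn.aestronglyMeasurable ?_ measurableSet_Ioi)
        apply ContinuousOn.mul
        · apply ContinuousOn.rpow_const continuousOn_id
          intro r hr; left; exact ne_of_gt hr
        apply ContinuousOn.mul
        · exact (Real.continuous_exp.comp (continuous_const.mul continuous_id)).continuousOn
        · apply ContinuousOn.rpow_const (by fun_prop)
          intro r hr
          left
          have : (0:ℝ) < r := hr
          exact ne_of_gt (by linarith)
      · filter_upwards [ae_restrict_mem measurableSet_Ioi] with r hr
        replace hr : 0 < r := hr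
        rw [Real.norm_of_nonneg (by positivity)]
        have key : r ^ ((d:ℝ)-1) * (r + 1) ^ ((2:ℝ)-d) ≤ r + 1 := by
          calc r ^ ((d:ℝ)-1) * (r + 1) ^ ((2:ℝ)-d)
              ≤ (r+1) ^ ((d:ℝ)-1) * (r + 1) ^ ((2:ℝ)-d) := by
                apply mul_le_mul_of_nonneg_right
                  (Real.rpow_le_rpow hr.le (by linarith) (by linarith))
                positivity
            _ = (r+1) ^ ((d:ℝ)-1+((2:ℝ)-d)) := by
                rw [← Real.rpow_add (by linarith)]
            _ = r + 1 := by norm_num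
        calc r ^ ((d:ℝ)-1) * (Real.exp (-(c/(2*R)) * r) * (r + 1) ^ ((2:ℝ)-d))
            = Real.exp (-(c/(2*R)) * r) * (r ^ ((d:ℝ)-1) * (r + 1) ^ ((2:ℝ)-d)) := by ring
          _ ≤ Real.exp (-(c/(2*R)) * r) * (r + 1) :=
              mul_le_mul_of_nonneg_left key (Real.exp_pos _).le
  have step6 : (∫ r in Set.Ioi (0:ℝ), Real.exp (-(c/(2*R)) * r) * (r + 1))
      ≤ (4/c^2 + 2/c) * R^2 := by
    rw [exp_mul_value _ ha]
    have h1 : 1/(c/(2*R))^2 = 4*R^2/c^2 := by field_simp; ring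
    have h2 : 1/(c/(2*R)) = 2*R/c := by field_simp
    rw [h1, h2]
    have hRR : R ≤ R^2 := by nlinarith
    calc 4*R^2/c^2 + 2*R/c ≤ 4*R^2/c^2 + 2*R^2/c := by gcongr
      _ = (4/c^2 + 2/c)*R^2 := by ring
  -- combine
  have final : (∫ x in (Metric.ball (0 : EuclideanSpace ℝ (Fin d)) R)ᶜ,
        R ^ ((1 : ℝ) - d) * Real.exp (-c * (‖x + y‖ + ‖x‖) / R) * (‖x + y‖ + 1) ^ ((2 : ℝ) - d))
      ≤ (R ^ ((1:ℝ) - d) * Real.exp (-c * ‖y‖ / (2*R))) *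
          ((d * (volume (Metric.ball (0 : EuclideanSpace ℝ (Fin d)) 1)).toReal)
            * ((4/c^2 + 2/c) * R^2)) := by
    refine (step1.trans step2).trans ?_
    rw [step3, step4]
    apply mul_le_mul_of_nonneg_left ?_ (by positivity)
    apply mul_le_mul_of_nonneg_left (step5.trans step6) (by positivity)
  refine final.trans (le_of_eq ?_)
  have hpow : R ^ ((1:ℝ) - d) * R^2 = R ^ ((3:ℝ) - d) := by
    rw [← Real.rpow_natCast R 2, ← Real.rpow_add hR0,
      show (1:ℝ) - d + (2:ℕ) = 3 - d by push_cast; ring]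
  calc (R ^ ((1:ℝ) - d) * Real.exp (-c * ‖y‖ / (2*R))) *
          ((d * (volume (Metric.ball (0 : EuclideanSpace ℝ (Fin d)) 1)).toReal)
            * ((4/c^2 + 2/c) * R^2))
      = ((d * (volume (Metric.ball (0 : EuclideanSpace ℝ (Fin d)) 1)).toReal) * (4/c^2 + 2/c))
          * (R ^ ((1:ℝ) - d) * R^2) * Real.exp (-c * ‖y‖ / (2*R)) := by ring
    _ = _ := by rw [hpow]

lemma outer_bound (d : ℕ) (hd : 3 ≤ d) (c : ℝ) (hc : 0 < c) (R : ℝ) (hR : 2 ≤ R) :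
    (∫ y in (Metric.ball (0 : EuclideanSpace ℝ (Fin d)) (R / 2))ᶜ,
        |∫ x in (Metric.ball (0 : EuclideanSpace ℝ (Fin d)) R)ᶜ,
            R ^ ((1 : ℝ) - d) * Real.exp (-c * (‖x + y‖ + ‖x‖) / R)
              * (‖x + y‖ + 1) ^ ((2 : ℝ) - d)| ^ 2)
      ≤ ((d * (volume (Metric.ball (0 : EuclideanSpace ℝ (Fin d)) 1)).toReal) * (4/c^2 + 2/c))^2
          * ((d * (volume (Metric.ball (0 : EuclideanSpace ℝ (Fin d)) 1)).toReal)
              * (c ^ (-(d:ℝ)) * Real.Gamma d))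
          * R ^ ((6:ℝ) - d) := by
  have hR0 : (0:ℝ) < R := by linarith
  have hdr : (3:ℝ) ≤ (d:ℝ) := hd3 d hd
  set V := (volume (Metric.ball (0 : EuclideanSpace ℝ (Fin d)) 1)).toReal with hV
  set K₁ : ℝ := (d * V) * (4/c^2 + 2/c) with hK₁
  have hK₁0 : 0 ≤ K₁ := by
    have := ball_vol_pos d hd
    positivity
  have hcR : 0 < c / R := by positivity
  have hDint : Integrable (fun y : EuclideanSpace ℝ (Fin d) =>
      (K₁ * R ^ ((3:ℝ)-d))^2 * Real.exp (-(c/R) * ‖y‖)) :=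
    (expE_integrable d hd _ hcR).const_mul _
  have hpt : ∀ y : EuclideanSpace ℝ (Fin d),
      |∫ x in (Metric.ball (0 : EuclideanSpace ℝ (Fin d)) R)ᶜ,
          R ^ ((1 : ℝ) - d) * Real.exp (-c * (‖x + y‖ + ‖x‖) / R)
            * (‖x + y‖ + 1) ^ ((2 : ℝ) - d)| ^ 2
        ≤ (K₁ * R ^ ((3:ℝ)-d))^2 * Real.exp (-(c/R) * ‖y‖) := by
    intro y
    rw [sq_abs]
    have hb := inner_bound d hd c hc R hR y
    have h0 := inner_nonneg d c R hR0 y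
    calc (∫ x in (Metric.ball (0 : EuclideanSpace ℝ (Fin d)) R)ᶜ,
          R ^ ((1 : ℝ) - d) * Real.exp (-c * (‖x + y‖ + ‖x‖) / R)
            * (‖x + y‖ + 1) ^ ((2 : ℝ) - d)) ^ 2
        ≤ (K₁ * R ^ ((3:ℝ)-d) * Real.exp (-c * ‖y‖ / (2*R))) ^ 2 := by
          apply pow_le_pow_left₀ h0 ?_ 2
          exact hb
      _ = (K₁ * R ^ ((3:ℝ)-d))^2 * Real.exp (-(c/R) * ‖y‖) := by
          rw [mul_pow (K₁ * R ^ ((3:ℝ)-d)), pow_two (Real.exp _), ← Real.exp_add]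
          congr 2
          field_simp
          ring
  calc (∫ y in (Metric.ball (0 : EuclideanSpace ℝ (Fin d)) (R / 2))ᶜ,
        |∫ x in (Metric.ball (0 : EuclideanSpace ℝ (Fin d)) R)ᶜ,
            R ^ ((1 : ℝ) - d) * Real.exp (-c * (‖x + y‖ + ‖x‖) / R)
              * (‖x + y‖ + 1) ^ ((2 : ℝ) - d)| ^ 2)
      ≤ ∫ y in (Metric.ball (0 : EuclideanSpace ℝ (Fin d)) (R / 2))ᶜ,
          (K₁ * R ^ ((3:ℝ)-d))^2 * Real.exp (-(c/R) * ‖y‖) := by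
        apply integral_mono_of_nonneg
        · filter_upwards with y; positivity
        · exact hDint.restrict
        · filter_upwards with y; exact hpt y
    _ ≤ ∫ y : EuclideanSpace ℝ (Fin d),
          (K₁ * R ^ ((3:ℝ)-d))^2 * Real.exp (-(c/R) * ‖y‖) := by
        apply setIntegral_le_integral hDint
        filter_upwards with y; positivity
    _ = (K₁ * R ^ ((3:ℝ)-d))^2 * ((d * V) * ((c/R) ^ (-(d:ℝ)) * Real.Gamma d)) := by
        rw [integral_const_mul, expE_value d hd _ hcR]
    _ = K₁^2 * ((d * V) * (c ^ (-(d:ℝ)) * Real.Gamma d)) * R ^ ((6:ℝ) - d) := by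
        have e1 : (R ^ ((3:ℝ)-d))^2 = R ^ ((6:ℝ)-2*d) := by
          rw [← Real.rpow_natCast (R ^ ((3:ℝ)-d)) 2, ← Real.rpow_mul hR0.le,
            show ((3:ℝ)-d) * (2:ℕ) = 6-2*d by push_cast; ring]
        have e2 : (c/R) ^ (-(d:ℝ)) = c ^ (-(d:ℝ)) * R ^ ((d:ℝ)) := by
          rw [Real.div_rpow hc.le hR0.le, Real.rpow_neg hR0.le]
          field_simp
        have e3 : R ^ ((6:ℝ)-2*d) * R ^ ((d:ℝ)) = R ^ ((6:ℝ)-d) := by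
          rw [← Real.rpow_add hR0]; congr 1; ring
        rw [mul_pow, e1, e2, ← e3]
        ring

lemma oneDim_integrable' (b q : ℝ) (hb : 0 < b) (hq : -1 < q) :
    IntegrableOn (fun r : ℝ => r ^ q * Real.exp (-b * r)) (Set.Ioi 0) := by
  have := integrableOn_rpow_mul_exp_neg_mul_rpow hq one_pos hb
  refine this.congr_fun (fun x hx => by simp [Real.rpow_one]) measurableSet_Ioi

lemma oneDim_value' (b q : ℝ) (hb : 0 < b) (hq : -1 < q) :
    ∫ r in Set.Ioi (0:ℝ), r ^ q * Real.exp (-b * r) = b ^ (-(q+1)) * Real.Gamma (q+1) := by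
  rw [setIntegral_congr_fun measurableSet_Ioi (g := fun x => x ^ q * Real.exp (-b * x ^ (1:ℝ)))
    (fun x hx => by simp [Real.rpow_one]),
    integral_rpow_mul_exp_neg_mul_rpow one_pos hq hb]
  simp

lemma expOnly_integrable (a : ℝ) (ha : 0 < a) :
    IntegrableOn (fun r : ℝ => Real.exp (-a*r)) (Set.Ioi 0) := by
  refine (oneDim_integrable' a 0 ha (by norm_num)).congr_fun ?_ measurableSet_Ioi
  intro x hx; simp

lemma expOnly_value (a : ℝ) (ha : 0 < a) :
    ∫ r in Set.Ioi (0:ℝ), Real.exp (-a*r) = 1/a := by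
  rw [setIntegral_congr_fun measurableSet_Ioi (g := fun x => x ^ (0:ℝ) * Real.exp (-a * x))
    (fun x hx => by simp), oneDim_value' a 0 ha (by norm_num)]
  norm_num [Real.rpow_neg_one, Real.Gamma_one]

section J
variable (d : ℕ) (c R : ℝ)

lemma fJ_measurable : ∀ s : Set ℝ, s ⊆ Set.Ioi 0 → MeasurableSet s → AEStronglyMeasurable
    (fun r : ℝ => Real.exp (-2 * c * r / R) * (r + 1) ^ ((4 : ℝ) - 2 * d) * r ^ ((d : ℝ) - 1))
    (volume.restrict s) := by
  intro s hs hms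
  apply ContinuousOn.aestronglyMeasurable ?_ hms
  apply ContinuousOn.mono ?_ hs
  apply ContinuousOn.mul
  apply ContinuousOn.mul
  · exact (Real.continuous_exp.comp (by fun_prop)).continuousOn
  · apply ContinuousOn.rpow_const (by fun_prop)
    intro r hr
    have : (0:ℝ) < r := hr
    exact Or.inl (by positivity)
  · apply ContinuousOn.rpow_const continuousOn_id
    intro r hr
    exact Or.inl (ne_of_gt hr)

lemma fJ_integrable (hd : 3 ≤ d) (hc : 0 < c) (hR : 2 ≤ R) :
    IntegrableOn
      (fun r : ℝ => Real.exp (-2 * c * r / R) * (r + 1) ^ ((4 : ℝ) - 2 * d) * r ^ ((d : ℝ) - 1))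
      (Set.Ioi 0) := by
  have hR0 : (0:ℝ) < R := by linarith
  have hdr : (3:ℝ) ≤ (d:ℝ) := by exact_mod_cast hd
  have ha : 0 < 2*c/R := by positivity
  apply ((oneDim_integrable' (2*c/R) ((d:ℝ)-1) ha (by linarith)).mono'
    (fJ_measurable d c R _ le_rfl measurableSet_Ioi))
  filter_upwards [ae_restrict_mem measurableSet_Ioi] with r hr
  have hr0 : (0:ℝ) < r := hr
  rw [Real.norm_of_nonneg (by positivity)]
  have h1 : (r + 1) ^ ((4 : ℝ) - 2 * d) ≤ 1 :=
    Real.rpow_le_one_of_one_le_of_nonpos (by linarith) (by linarith)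
  have h2 : Real.exp (-2 * c * r / R) = Real.exp (-(2*c/R) * r) := by ring_nf
  calc Real.exp (-2 * c * r / R) * (r + 1) ^ ((4 : ℝ) - 2 * d) * r ^ ((d : ℝ) - 1)
      ≤ Real.exp (-2 * c * r / R) * 1 * r ^ ((d : ℝ) - 1) := by
        apply mul_le_mul_of_nonneg_right (mul_le_mul_of_nonneg_left h1 (Real.exp_pos _).le)
        positivity
    _ = r ^ ((d:ℝ)-1) * Real.exp (-(2*c/R) * r) := by rw [h2]; ring

lemma fJ_nonneg :
    0 ≤ ∫ r in Set.Ioi (0:ℝ),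
      Real.exp (-2 * c * r / R) * (r + 1) ^ ((4 : ℝ) - 2 * d) * r ^ ((d : ℝ) - 1) := by
  apply setIntegral_nonneg measurableSet_Ioi
  intro r hr
  have hr0 : (0:ℝ) < r := hr
  positivity

lemma fJ_pt (hd : 3 ≤ d) (hc : 0 < c) (hR : 2 ≤ R) (r : ℝ) (hr : 0 < r) :
    Real.exp (-2 * c * r / R) * (r + 1) ^ ((4 : ℝ) - 2 * d) * r ^ ((d : ℝ) - 1)
      ≤ Real.exp (-(2*c/R) * r) * (r + 1) ^ ((3 : ℝ) - d) := by
  have hdr : (3:ℝ) ≤ (d:ℝ) := by exact_mod_cast hd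
  have h2 : Real.exp (-2 * c * r / R) = Real.exp (-(2*c/R) * r) := by ring_nf
  have key : (r + 1) ^ ((4 : ℝ) - 2 * d) * r ^ ((d : ℝ) - 1) ≤ (r + 1) ^ ((3:ℝ) - d) := by
    calc (r + 1) ^ ((4 : ℝ) - 2 * d) * r ^ ((d : ℝ) - 1)
        ≤ (r + 1) ^ ((4 : ℝ) - 2 * d) * (r+1) ^ ((d : ℝ) - 1) := by
          apply mul_le_mul_of_nonneg_left
            (Real.rpow_le_rpow hr.le (by linarith) (by linarith))
          positivity
      _ = (r + 1) ^ ((4 : ℝ) - 2 * d + ((d:ℝ) - 1)) := by rw [← Real.rpow_add (by linarith)]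
      _ = (r + 1) ^ ((3:ℝ) - d) := by congr 1; ring
  rw [h2, mul_assoc]
  exact mul_le_mul_of_nonneg_left key (Real.exp_pos _).le

lemma J_lower (hd : 3 ≤ d) (hc : 0 < c) (hR : 2 ≤ R) :
    Real.exp (-c) * 2 ^ ((4:ℝ) - 2*(d:ℝ)) * ((2:ℝ)⁻¹) ^ ((d:ℝ)-1) * 2⁻¹
      ≤ ∫ r in Set.Ioi (0:ℝ),
          Real.exp (-2 * c * r / R) * (r + 1) ^ ((4 : ℝ) - 2 * d) * r ^ ((d : ℝ) - 1) := by
  have hR0 : (0:ℝ) < R := by linarith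
  have hdr : (3:ℝ) ≤ (d:ℝ) := by exact_mod_cast hd
  have hsub : Set.Ioc ((2:ℝ)⁻¹) 1 ⊆ Set.Ioi 0 := fun x hx => by
    have := hx.1; simp only [Set.mem_Ioi]; linarith [hx.1]
  have hfint := fJ_integrable d c R hd hc hR
  calc Real.exp (-c) * 2 ^ ((4:ℝ) - 2*(d:ℝ)) * ((2:ℝ)⁻¹) ^ ((d:ℝ)-1) * 2⁻¹
      = ∫ r in Set.Ioc ((2:ℝ)⁻¹) 1,
          (fun _ : ℝ => Real.exp (-c) * 2 ^ ((4:ℝ) - 2*(d:ℝ)) * ((2:ℝ)⁻¹) ^ ((d:ℝ)-1)) r := by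
        rw [setIntegral_const, measureReal_def, Real.volume_Ioc, smul_eq_mul]
        rw [show (1:ℝ) - 2⁻¹ = 2⁻¹ by norm_num, ENNReal.toReal_ofReal (by norm_num)]
        ring
    _ ≤ ∫ r in Set.Ioc ((2:ℝ)⁻¹) 1,
          Real.exp (-2 * c * r / R) * (r + 1) ^ ((4 : ℝ) - 2 * d) * r ^ ((d : ℝ) - 1) := by
        apply setIntegral_mono_on (integrableOn_const measure_Ioc_lt_top.ne)
          (hfint.mono_set hsub) measurableSet_Ioc
        intro r hr
        obtain ⟨hr1, hr2⟩ := hr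
        have hr0 : (0:ℝ) < r := by linarith [hr1]
        have e1 : Real.exp (-c) ≤ Real.exp (-2 * c * r / R) := by
          apply Real.exp_le_exp.mpr
          rw [neg_le, show -(-2 * c * r / R) = 2*c*r/R by ring, div_le_iff₀ hR0]
          nlinarith
        have e2 : (2:ℝ) ^ ((4:ℝ) - 2*(d:ℝ)) ≤ (r + 1) ^ ((4 : ℝ) - 2 * d) :=
          Real.rpow_le_rpow_of_nonpos (by linarith) (by linarith) (by linarith)
        have e3 : ((2:ℝ)⁻¹) ^ ((d:ℝ)-1) ≤ r ^ ((d : ℝ) - 1) :=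
          Real.rpow_le_rpow (by norm_num) (by linarith) (by linarith)
        have p2 : (0:ℝ) ≤ (r + 1) ^ ((4 : ℝ) - 2 * d) := by positivity
        have p3 : (0:ℝ) ≤ r ^ ((d : ℝ) - 1) := by positivity
        exact mul_le_mul (mul_le_mul e1 e2 (by positivity) (Real.exp_pos _).le) e3
          (by positivity) (by positivity)
    _ ≤ ∫ r in Set.Ioi (0:ℝ),
          Real.exp (-2 * c * r / R) * (r + 1) ^ ((4 : ℝ) - 2 * d) * r ^ ((d : ℝ) - 1) := by
        apply setIntegral_mono_set hfint
        · filter_upwards [ae_restrict_mem measurableSet_Ioi] with r hr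
          have hr0 : (0:ℝ) < r := hr
          positivity
        · exact HasSubset.Subset.eventuallyLE hsub
end J

section J2
variable (d : ℕ) (c R : ℝ)

lemma J3_lower (hc : 0 < c) (hR : 2 ≤ R) :
    Real.exp (-(2*c)) / 8 * R
      ≤ ∫ r in Set.Ioi (0:ℝ),
          Real.exp (-2 * c * r / R) * (r + 1) ^ ((4 : ℝ) - 2 * (3:ℕ)) * r ^ (((3:ℕ) : ℝ) - 1) := by
  have hR0 : (0:ℝ) < R := by linarith
  have hfint := fJ_integrable 3 c R le_rfl hc hR
  have hsub : Set.Ioc (1:ℝ) R ⊆ Set.Ioi 0 := fun x hx => by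
    simp only [Set.mem_Ioi]; linarith [hx.1]
  calc Real.exp (-(2*c)) / 8 * R
      ≤ Real.exp (-(2*c)) / 4 * (R - 1) := by
        rw [div_mul_eq_mul_div, div_mul_eq_mul_div, div_le_div_iff₀ (by norm_num) (by norm_num)]
        nlinarith [Real.exp_pos (-(2*c))]
    _ = ∫ r in Set.Ioc (1:ℝ) R,
          (fun _ : ℝ => Real.exp (-(2*c)) / 4) r := by
        rw [setIntegral_const, measureReal_def, Real.volume_Ioc, smul_eq_mul,
          ENNReal.toReal_ofReal (by linarith)]
        ring
    _ ≤ ∫ r in Set.Ioc (1:ℝ) R,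
          Real.exp (-2 * c * r / R) * (r + 1) ^ ((4 : ℝ) - 2 * (3:ℕ)) * r ^ (((3:ℕ) : ℝ) - 1) := by
        apply setIntegral_mono_on (integrableOn_const measure_Ioc_lt_top.ne)
          (hfint.mono_set hsub) measurableSet_Ioc
        intro r hr
        obtain ⟨hr1, hr2⟩ := hr
        have hr0 : (0:ℝ) < r := by linarith
        have e1 : Real.exp (-(2*c)) ≤ Real.exp (-2 * c * r / R) := by
          apply Real.exp_le_exp.mpr
          rw [neg_le, show -(-2 * c * r / R) = 2*c*r/R by ring, div_le_iff₀ hR0]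
          nlinarith
        have e2 : (r + 1) ^ ((4 : ℝ) - 2 * ((3:ℕ):ℝ)) * r ^ (((3:ℕ) : ℝ) - 1)
            = r^2 / (r+1)^2 := by
          rw [show (4 : ℝ) - 2 * ((3:ℕ):ℝ) = -2 by norm_num,
            show (((3:ℕ):ℝ) - 1) = 2 by norm_num]
          rw [show (-2 : ℝ) = -((2:ℕ):ℝ) by norm_num, Real.rpow_neg (by linarith),
            Real.rpow_natCast, Real.rpow_two]
          ring
        have e3 : (1:ℝ)/4 ≤ r^2 / (r+1)^2 := by
          rw [div_le_div_iff₀ (by norm_num) (by positivity)]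
          nlinarith
        calc Real.exp (-(2*c)) / 4 = Real.exp (-(2*c)) * (1/4) := by ring
          _ ≤ Real.exp (-2 * c * r / R) * (r^2/(r+1)^2) := by
              apply mul_le_mul e1 e3 (by norm_num) (Real.exp_pos _).le
          _ = Real.exp (-2 * c * r / R) * ((r + 1) ^ ((4 : ℝ) - 2 * ((3:ℕ):ℝ)) * r ^ (((3:ℕ):ℝ) - 1)) := by
              rw [e2]
          _ = Real.exp (-2 * c * r / R) * (r + 1) ^ ((4 : ℝ) - 2 * (3:ℕ)) * r ^ (((3:ℕ) : ℝ) - 1) := by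
              push_cast
              ring
    _ ≤ ∫ r in Set.Ioi (0:ℝ),
          Real.exp (-2 * c * r / R) * (r + 1) ^ ((4 : ℝ) - 2 * (3:ℕ)) * r ^ (((3:ℕ) : ℝ) - 1) := by
        apply setIntegral_mono_set hfint
        · filter_upwards [ae_restrict_mem measurableSet_Ioi] with r hr
          have hr0 : (0:ℝ) < r := hr
          positivity
        · exact HasSubset.Subset.eventuallyLE hsub

lemma J_upper3 (hc : 0 < c) (hR : 2 ≤ R) :
    (∫ r in Set.Ioi (0:ℝ),
        Real.exp (-2 * c * r / R) * (r + 1) ^ ((4 : ℝ) - 2 * (3:ℕ)) * r ^ (((3:ℕ) : ℝ) - 1))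
      ≤ R / (2*c) := by
  have hR0 : (0:ℝ) < R := by linarith
  have ha : 0 < 2*c/R := by positivity
  calc (∫ r in Set.Ioi (0:ℝ),
        Real.exp (-2 * c * r / R) * (r + 1) ^ ((4 : ℝ) - 2 * (3:ℕ)) * r ^ (((3:ℕ) : ℝ) - 1))
      ≤ ∫ r in Set.Ioi (0:ℝ), Real.exp (-(2*c/R) * r) := by
        apply setIntegral_mono_on (fJ_integrable 3 c R le_rfl hc hR)
          (expOnly_integrable _ ha) measurableSet_Ioi
        intro r hr
        have hr0 : (0:ℝ) < r := hr
        have key := fJ_pt 3 c R le_rfl hc hR r hr0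
        refine key.trans ?_
        rw [show ((3:ℝ) - ((3:ℕ):ℝ)) = 0 by norm_num, Real.rpow_zero, mul_one]
    _ = 1 / (2*c/R) := expOnly_value _ ha
    _ = R / (2*c) := by field_simp
end J2

section J3
variable (d : ℕ) (c R : ℝ)

lemma J_split (hd : 3 ≤ d) (hc : 0 < c) (hR : 2 ≤ R) (b : ℝ) (hb : 0 < b) :
    ∫ r in Set.Ioi (0:ℝ),
        Real.exp (-2 * c * r / R) * (r + 1) ^ ((4 : ℝ) - 2 * d) * r ^ ((d : ℝ) - 1)
      = (∫ r in Set.Ioc (0:ℝ) b,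
          Real.exp (-2 * c * r / R) * (r + 1) ^ ((4 : ℝ) - 2 * d) * r ^ ((d : ℝ) - 1))
        + ∫ r in Set.Ioi b,
            Real.exp (-2 * c * r / R) * (r + 1) ^ ((4 : ℝ) - 2 * d) * r ^ ((d : ℝ) - 1) := by
  have hfint := fJ_integrable d c R hd hc hR
  rw [← setIntegral_union (Set.Ioc_disjoint_Ioi le_rfl) measurableSet_Ioi
    (hfint.mono_set Set.Ioc_subset_Ioi_self)
    (hfint.mono_set (Set.Ioi_subset_Ioi hb.le)),
    Set.Ioc_union_Ioi_eq_Ioi hb.le]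

lemma J_upper5 (hd : 5 ≤ d) (hc : 0 < c) (hR : 2 ≤ R) :
    (∫ r in Set.Ioi (0:ℝ),
        Real.exp (-2 * c * r / R) * (r + 1) ^ ((4 : ℝ) - 2 * d) * r ^ ((d : ℝ) - 1))
      ≤ 2 := by
  have hd3 : 3 ≤ d := by omega
  have hdr : (5:ℝ) ≤ (d:ℝ) := by exact_mod_cast hd
  have hR0 : (0:ℝ) < R := by linarith
  have hfint := fJ_integrable d c R hd3 hc hR
  rw [J_split d c R hd3 hc hR 1 one_pos]
  have head : (∫ r in Set.Ioc (0:ℝ) 1,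
      Real.exp (-2 * c * r / R) * (r + 1) ^ ((4 : ℝ) - 2 * d) * r ^ ((d : ℝ) - 1)) ≤ 1 := by
    calc (∫ r in Set.Ioc (0:ℝ) 1,
        Real.exp (-2 * c * r / R) * (r + 1) ^ ((4 : ℝ) - 2 * d) * r ^ ((d : ℝ) - 1))
        ≤ ∫ r in Set.Ioc (0:ℝ) 1, (fun _ : ℝ => (1:ℝ)) r := by
          apply setIntegral_mono_on (hfint.mono_set Set.Ioc_subset_Ioi_self)
            (integrableOn_const measure_Ioc_lt_top.ne) measurableSet_Ioc
          intro r hr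
          obtain ⟨hr0, hr1⟩ := hr
          have e1 : Real.exp (-2 * c * r / R) ≤ 1 := by
            apply Real.exp_le_one_iff.mpr
            have : 0 < 2*c*r := by positivity
            rw [neg_mul, neg_mul, neg_div, neg_nonpos]
            positivity
          have e2 : (r + 1) ^ ((4 : ℝ) - 2 * d) ≤ 1 :=
            Real.rpow_le_one_of_one_le_of_nonpos (by linarith) (by linarith)
          have e3 : r ^ ((d : ℝ) - 1) ≤ 1 :=
            Real.rpow_le_one hr0.le hr1 (by linarith)
          calc Real.exp (-2 * c * r / R) * (r + 1) ^ ((4 : ℝ) - 2 * d) * r ^ ((d : ℝ) - 1)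
              ≤ 1 * 1 * 1 := by
                apply mul_le_mul (mul_le_mul e1 e2 (by positivity) (by norm_num)) e3
                  (by positivity) (by norm_num)
            _ = 1 := by norm_num
      _ = 1 := by
          rw [setIntegral_const, measureReal_def, Real.volume_Ioc, smul_eq_mul]
          norm_num
  have tail : (∫ r in Set.Ioi (1:ℝ),
      Real.exp (-2 * c * r / R) * (r + 1) ^ ((4 : ℝ) - 2 * d) * r ^ ((d : ℝ) - 1)) ≤ 1 := by
    calc (∫ r in Set.Ioi (1:ℝ),
        Real.exp (-2 * c * r / R) * (r + 1) ^ ((4 : ℝ) - 2 * d) * r ^ ((d : ℝ) - 1))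
        ≤ ∫ r in Set.Ioi (1:ℝ), r ^ (-2 : ℝ) := by
          apply setIntegral_mono_on (hfint.mono_set (Set.Ioi_subset_Ioi one_pos.le))
            (integrableOn_Ioi_rpow_of_lt (by norm_num) one_pos) measurableSet_Ioi
          intro r hr
          have hr1 : (1:ℝ) < r := hr
          have hr0 : (0:ℝ) < r := by linarith
          refine (fJ_pt d c R hd3 hc hR r hr0).trans ?_
          have e1 : Real.exp (-(2*c/R) * r) ≤ 1 := by
            apply Real.exp_le_one_iff.mpr
            rw [neg_mul, neg_nonpos]
            positivity
          have e2 : (r + 1) ^ ((3:ℝ) - d) ≤ (r+1) ^ (-2:ℝ) :=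
            Real.rpow_le_rpow_of_exponent_le (by linarith) (by linarith)
          have e3 : (r + 1) ^ (-2:ℝ) ≤ r ^ (-2:ℝ) :=
            Real.rpow_le_rpow_of_nonpos hr0 (by linarith) (by norm_num)
          calc Real.exp (-(2*c/R) * r) * (r + 1) ^ ((3:ℝ) - d)
              ≤ 1 * (r+1) ^ ((3:ℝ) - d) := by
                apply mul_le_mul_of_nonneg_right e1 (by positivity)
            _ = (r+1) ^ ((3:ℝ) - d) := one_mul _
            _ ≤ r ^ (-2:ℝ) := e2.trans e3
      _ = 1 := by
          rw [integral_Ioi_rpow_of_lt (by norm_num) one_pos]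
          norm_num
  linarith

end J3

section J4
variable (c R : ℝ)

lemma J_upper4 (hc : 0 < c) (hR : 2 ≤ R) :
    (∫ r in Set.Ioi (0:ℝ),
        Real.exp (-2 * c * r / R) * (r + 1) ^ ((4 : ℝ) - 2 * (4:ℕ)) * r ^ (((4:ℕ) : ℝ) - 1))
      ≤ 2 * Real.log R + 1/(2*c) := by
  have hd3 : 3 ≤ 4 := by omega
  have hR0 : (0:ℝ) < R := by linarith
  have ha : 0 < 2*c/R := by positivity
  have hfint := fJ_integrable 4 c R hd3 hc hR
  rw [J_split 4 c R hd3 hc hR R hR0]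
  have head : (∫ r in Set.Ioc (0:ℝ) R,
      Real.exp (-2 * c * r / R) * (r + 1) ^ ((4 : ℝ) - 2 * (4:ℕ)) * r ^ (((4:ℕ) : ℝ) - 1))
      ≤ 2 * Real.log R := by
    have hgi : IntegrableOn (fun r : ℝ => 1/(r+1)) (Set.Ioc (0:ℝ) R) := by
      apply IntegrableOn.mono_set ?_ Set.Ioc_subset_Icc_self
      apply ContinuousOn.integrableOn_Icc
      apply ContinuousOn.div continuousOn_const (by fun_prop)
      intro r hr
      have : (0:ℝ) ≤ r := hr.1
      positivity
    calc (∫ r in Set.Ioc (0:ℝ) R,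
        Real.exp (-2 * c * r / R) * (r + 1) ^ ((4 : ℝ) - 2 * (4:ℕ)) * r ^ (((4:ℕ) : ℝ) - 1))
        ≤ ∫ r in Set.Ioc (0:ℝ) R, 1/(r+1) := by
          apply setIntegral_mono_on (hfint.mono_set Set.Ioc_subset_Ioi_self) hgi
            measurableSet_Ioc
          intro r hr
          obtain ⟨hr0, hrR⟩ := hr
          refine (fJ_pt 4 c R hd3 hc hR r hr0).trans ?_
          have e1 : Real.exp (-(2*c/R) * r) ≤ 1 := by
            apply Real.exp_le_one_iff.mpr
            rw [neg_mul, neg_nonpos]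
            positivity
          have e2 : (r + 1) ^ ((3:ℝ) - ((4:ℕ):ℝ)) = 1/(r+1) := by
            rw [show (3:ℝ) - ((4:ℕ):ℝ) = -1 by norm_num, Real.rpow_neg_one, one_div]
          calc Real.exp (-(2*c/R) * r) * (r + 1) ^ ((3:ℝ) - ((4:ℕ):ℝ))
              ≤ 1 * (r + 1) ^ ((3:ℝ) - ((4:ℕ):ℝ)) :=
                mul_le_mul_of_nonneg_right e1 (by positivity)
            _ = 1/(r+1) := by rw [one_mul, e2]
      _ = Real.log (R+1) := by
          rw [← intervalIntegral.integral_of_le hR0.le]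
          have hcomp := intervalIntegral.integral_comp_add_right (a := (0:ℝ)) (b := R)
            (fun u : ℝ => 1/u) 1
          rw [hcomp, integral_one_div ?_]
          · rw [zero_add]; norm_num
          · intro h
            rw [Set.mem_uIcc] at h
            rcases h with ⟨h1, _⟩ | ⟨_, h2⟩ <;> [linarith; linarith]
      _ ≤ 2 * Real.log R := by
          have h1 : R + 1 ≤ R^2 := by nlinarith
          calc Real.log (R+1) ≤ Real.log (R^2) := Real.log_le_log (by linarith) h1
            _ = 2 * Real.log R := by rw [Real.log_pow]; norm_num
  have tail : (∫ r in Set.Ioi R,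
        Real.exp (-2 * c * r / R) * (r + 1) ^ ((4 : ℝ) - 2 * (4:ℕ)) * r ^ (((4:ℕ) : ℝ) - 1))
      ≤ 1/(2*c) := by
    calc (∫ r in Set.Ioi R,
        Real.exp (-2 * c * r / R) * (r + 1) ^ ((4 : ℝ) - 2 * (4:ℕ)) * r ^ (((4:ℕ) : ℝ) - 1))
        ≤ ∫ r in Set.Ioi R, (1/R) * Real.exp (-(2*c/R) * r) := by
          apply setIntegral_mono_on (hfint.mono_set (Set.Ioi_subset_Ioi hR0.le))
            (IntegrableOn.mono_set ((expOnly_integrable _ ha).const_mul (1/R))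
              (Set.Ioi_subset_Ioi hR0.le))
            measurableSet_Ioi
          intro r hr
          have hrR : R < r := hr
          have hr0 : (0:ℝ) < r := by linarith
          refine (fJ_pt 4 c R hd3 hc hR r hr0).trans ?_
          have e2 : (r + 1) ^ ((3:ℝ) - ((4:ℕ):ℝ)) ≤ 1/R := by
            rw [show (3:ℝ) - ((4:ℕ):ℝ) = -1 by norm_num, Real.rpow_neg_one, one_div]
            apply inv_anti₀ hR0 (by linarith)
          calc Real.exp (-(2*c/R) * r) * (r + 1) ^ ((3:ℝ) - ((4:ℕ):ℝ))
              ≤ Real.exp (-(2*c/R) * r) * (1/R) :=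
                mul_le_mul_of_nonneg_left e2 (Real.exp_pos _).le
            _ = (1/R) * Real.exp (-(2*c/R) * r) := by ring
      _ ≤ ∫ r in Set.Ioi (0:ℝ), (1/R) * Real.exp (-(2*c/R) * r) := by
          apply setIntegral_mono_set ((expOnly_integrable _ ha).const_mul (1/R))
          · filter_upwards [ae_restrict_mem measurableSet_Ioi] with r hr
            positivity
          · exact HasSubset.Subset.eventuallyLE (Set.Ioi_subset_Ioi hR0.le)
      _ = 1/(2*c) := by
          rw [integral_const_mul, expOnly_value _ ha]
          field_simp
  linarith

end J4


set_option maxHeartbeats 1000000 in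
/-- `∫_{ℝ^d ∖ 𝔹_{R/2}} |∫_{ℝ^d ∖ 𝔹_R} R^{1-d} e^{-c(|x+y|+|x|)/R} (|x+y|+1)^{2-d} dx|² dy`
is bounded by `C R² ∫_0^∞ e^{-2cr/R} (r+1)^{4-2d} r^{d-1} dr`, which in turn is `≤ C' Γ(R)²`. -/
theorem stmt_8 (d : ℕ) (hd : 3 ≤ d) (c : ℝ) (hc : 0 < c) :
    ∃ C : ℝ, 0 < C ∧ ∃ C' : ℝ, 0 < C' ∧ ∀ R : ℝ, 2 ≤ R →
      (∫ y in (Metric.ball (0 : EuclideanSpace ℝ (Fin d)) (R / 2))ᶜ,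
          |∫ x in (Metric.ball (0 : EuclideanSpace ℝ (Fin d)) R)ᶜ,
              R ^ ((1 : ℝ) - d) * Real.exp (-c * (‖x + y‖ + ‖x‖) / R)
                * (‖x + y‖ + 1) ^ ((2 : ℝ) - d)| ^ 2
        ≤ C * R ^ 2 *
            ∫ r in Set.Ioi (0 : ℝ),
              Real.exp (-2 * c * r / R) * (r + 1) ^ ((4 : ℝ) - 2 * d) * r ^ ((d : ℝ) - 1)) ∧
      C * R ^ 2 *
          (∫ r in Set.Ioi (0 : ℝ),
            Real.exp (-2 * c * r / R) * (r + 1) ^ ((4 : ℝ) - 2 * d) * r ^ ((d : ℝ) - 1))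
        ≤ C' * (Gam d R) ^ 2 := by
  
  have hdr : (3:ℝ) ≤ (d:ℝ) := hd3 d hd
  have hd0 : (0:ℝ) < (d:ℝ) := by linarith
  obtain ⟨V, hVd, hV⟩ : ∃ V : ℝ,
      V = (volume (Metric.ball (0 : EuclideanSpace ℝ (Fin d)) 1)).toReal ∧ 0 < V :=
    ⟨_, rfl, ball_vol_pos d hd⟩
  have hΓ : 0 < Real.Gamma d := Real.Gamma_pos_of_pos hd0
  set K₂ : ℝ := ((d * V) * (4/c^2 + 2/c))^2 * ((d * V) * (c ^ (-(d:ℝ)) * Real.Gamma d)) with hK₂def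
  have hK₂ : 0 < K₂ := by positivity
  set m : ℝ := Real.exp (-c) * 2 ^ ((4:ℝ) - 2*(d:ℝ)) * ((2:ℝ)⁻¹) ^ ((d:ℝ)-1) * 2⁻¹ with hmdef
  have hm : 0 < m := by positivity
  have hlog2 : 0 < Real.log 2 := Real.log_pos (by norm_num)
  refine ⟨K₂/m + K₂ * 8 * Real.exp (2*c), by positivity,
    (K₂/m + K₂ * 8 * Real.exp (2*c)) * (1/(2*c) + (2 + 1/(2*c*Real.log 2)) + 2),
    by positivity, fun R hR => ?_⟩
  set C : ℝ := K₂/m + K₂ * 8 * Real.exp (2*c) with hCdef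
  have hC : 0 < C := by positivity
  set C' : ℝ := C * (1/(2*c) + (2 + 1/(2*c*Real.log 2)) + 2) with hC'def
  have hC' : 0 < C' := by positivity
  have hR0 : (0:ℝ) < R := by linarith
  have hR1 : (1:ℝ) ≤ R := by linarith
  set J := ∫ r in Set.Ioi (0:ℝ),
    Real.exp (-2 * c * r / R) * (r + 1) ^ ((4 : ℝ) - 2 * d) * r ^ ((d : ℝ) - 1) with hJdef
  have hJ0 : 0 ≤ J := by rw [hJdef]; exact fJ_nonneg d c R
  have hJm : m ≤ J := by rw [hJdef, hmdef]; exact J_lower d c R hd hc hR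
  have houter : (∫ y in (Metric.ball (0 : EuclideanSpace ℝ (Fin d)) (R / 2))ᶜ,
      |∫ x in (Metric.ball (0 : EuclideanSpace ℝ (Fin d)) R)ᶜ,
          R ^ ((1 : ℝ) - d) * Real.exp (-c * (‖x + y‖ + ‖x‖) / R)
            * (‖x + y‖ + 1) ^ ((2 : ℝ) - d)| ^ 2)
      ≤ K₂ * R ^ ((6:ℝ) - d) := by
    rw [hK₂def, hVd]
    have h := outer_bound d hd c hc R hR
    calc _ ≤ _ := h
      _ = _ := by ring
  constructor
  · -- part 1
    refine houter.trans ?_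
    by_cases h3 : d = 3
    · subst h3
      have hJ3 : Real.exp (-(2*c))/8 * R ≤ J := by
        rw [hJdef]; exact J3_lower c R hc hR
      have hpow : R ^ ((6:ℝ) - ((3:ℕ):ℝ)) = R ^ (3:ℕ) := by
        rw [show (6:ℝ) - ((3:ℕ):ℝ) = ((3:ℕ):ℝ) by norm_num, Real.rpow_natCast]
      have t1 : (K₂*8*Real.exp (2*c)) * R^2 * (Real.exp (-(2*c))/8 * R)
          ≤ (K₂*8*Real.exp (2*c)) * R^2 * J :=
        mul_le_mul_of_nonneg_left hJ3 (by positivity)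
      have t2 : 0 ≤ (K₂/m) * R^2 * J := by positivity
      have expand : C * R^2 * J = (K₂/m)*R^2*J + (K₂*8*Real.exp (2*c))*R^2*J := by
        rw [hCdef]; ring
      have key : K₂ * R ^ (3:ℕ) = (K₂*8*Real.exp (2*c)) * R^2 * (Real.exp (-(2*c))/8 * R) := by
        rw [show (K₂*8*Real.exp (2*c)) * R^2 * (Real.exp (-(2*c))/8 * R)
            = K₂ * (Real.exp (2*c) * Real.exp (-(2*c))) * R^(3:ℕ) by ring,
          ← Real.exp_add, add_neg_cancel, Real.exp_zero, mul_one]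
      rw [hpow, key]
      linarith
    · have hd4 : 4 ≤ d := by omega
      have hdr4 : (4:ℝ) ≤ (d:ℝ) := by exact_mod_cast hd4
      have hpow : R ^ ((6:ℝ) - d) ≤ R^2 := by
        rw [show (R:ℝ)^2 = R^(((2:ℕ)):ℝ) by rw [Real.rpow_natCast]]
        exact Real.rpow_le_rpow_of_exponent_le hR1 (by push_cast; linarith)
      have expand : C * R^2 * J = (K₂/m)*R^2*J + (K₂*8*Real.exp (2*c))*R^2*J := by
        rw [hCdef]; ring
      have t2 : 0 ≤ (K₂*8*Real.exp (2*c)) * R^2 * J := by positivity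
      calc K₂ * R^((6:ℝ)-d) ≤ K₂ * R^2 := mul_le_mul_of_nonneg_left hpow hK₂.le
        _ = (K₂/m) * R^2 * m := by field_simp
        _ ≤ (K₂/m) * R^2 * J := mul_le_mul_of_nonneg_left hJm (by positivity)
        _ ≤ C * R^2 * J := by rw [expand]; linarith
  · -- part 2
    by_cases h3 : d = 3
    · subst h3
      have hGam : Gam 3 R = R ^ ((3:ℝ)/2) := by simp [Gam]
      have hg : (R ^ ((3:ℝ)/2))^2 = R^(3:ℕ) := by
        rw [← Real.rpow_natCast (R ^ ((3:ℝ)/2)) 2, ← Real.rpow_mul hR0.le,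
          show (3:ℝ)/2*((2:ℕ):ℝ) = ((3:ℕ):ℝ) by norm_num, Real.rpow_natCast]
      have hJu : J ≤ R/(2*c) := by rw [hJdef]; exact J_upper3 c R hc hR
      have hsum : C * (1/(2*c)) ≤ C' := by
        rw [hC'def]
        have p1 : 0 ≤ C * ((2 + 1/(2*c*Real.log 2)) + 2) := mul_nonneg hC.le (by positivity)
        nlinarith
      rw [hGam, hg]
      calc C*R^2*J ≤ C*R^2*(R/(2*c)) := mul_le_mul_of_nonneg_left hJu (by positivity)
        _ = (C*(1/(2*c))) * R^(3:ℕ) := by ring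
        _ ≤ C' * R^(3:ℕ) := mul_le_mul_of_nonneg_right hsum (by positivity)
    · by_cases h4 : d = 4
      · subst h4
        have hGam : Gam 4 R = R * (Real.log R) ^ ((1:ℝ)/2) := by simp [Gam]
        have hlogR : 0 < Real.log R := Real.log_pos (by linarith)
        have hloglog : Real.log 2 ≤ Real.log R := Real.log_le_log (by norm_num) (by linarith)
        have hg : (R * (Real.log R) ^ ((1:ℝ)/2))^2 = R^2 * Real.log R := by
          rw [mul_pow]
          congr 1
          rw [← Real.rpow_natCast ((Real.log R) ^ ((1:ℝ)/2)) 2, ← Real.rpow_mul hlogR.le,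
            show (1:ℝ)/2*((2:ℕ):ℝ) = 1 by norm_num, Real.rpow_one]
        have hJu : J ≤ 2 * Real.log R + 1/(2*c) := by rw [hJdef]; exact J_upper4 c R hc hR
        have h5 : 1/(2*c) ≤ 1/(2*c*Real.log 2) * Real.log R := by
          have e : 1/(2*c*Real.log 2) * Real.log 2 = 1/(2*c) := by
            field_simp
          have := mul_le_mul_of_nonneg_left hloglog (by positivity : (0:ℝ) ≤ 1/(2*c*Real.log 2))
          linarith
        have hJu2 : J ≤ (2 + 1/(2*c*Real.log 2)) * Real.log R := by
          calc J ≤ 2 * Real.log R + 1/(2*c) := hJu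
            _ ≤ 2 * Real.log R + 1/(2*c*Real.log 2) * Real.log R := by linarith
            _ = (2 + 1/(2*c*Real.log 2)) * Real.log R := by ring
        have hsum : C * (2 + 1/(2*c*Real.log 2)) ≤ C' := by
          rw [hC'def]
          have p1 : 0 ≤ C * (1/(2*c) + 2) := mul_nonneg hC.le (by positivity)
          nlinarith
        rw [hGam, hg]
        calc C*R^2*J ≤ C*R^2*((2 + 1/(2*c*Real.log 2)) * Real.log R) :=
              mul_le_mul_of_nonneg_left hJu2 (by positivity)
          _ = (C*(2 + 1/(2*c*Real.log 2))) * (R^2 * Real.log R) := by ring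
          _ ≤ C' * (R^2 * Real.log R) := mul_le_mul_of_nonneg_right hsum (by positivity)
      · have hGam : Gam d R = R := by simp [Gam, h3, h4]
        have hJu : J ≤ 2 := by rw [hJdef]; exact J_upper5 d c R (by omega) hc hR
        have hsum : C * 2 ≤ C' := by
          rw [hC'def]
          have p1 : 0 ≤ C * (1/(2*c) + 1/(2*c*Real.log 2)) := mul_nonneg hC.le (by positivity)
          nlinarith
        rw [hGam]
        calc C*R^2*J ≤ C*R^2*2 := mul_le_mul_of_nonneg_left hJu (by positivity)
          _ = (C*2) * R^2 := by ring
          _ ≤ C' * R^2 := mul_le_mul_of_nonneg_right hsum (by positivity)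
end

section
/- Let $d\ge 3$ and $c>0$. There exists $C=C(d,c)$ such that for every $R\ge 2$ and every $x\in\mathbb{Z}^d$: $\sum_{z\in\mathbb{Z}^d}(|z|\wedge R+1)^{-2}e^{-c|z|/R}(|z|+1)^{2-d} \le C\log R$. -/
/-- Euclidean norm of a lattice point `z ∈ ℤ^d`. -/
noncomputable def latNorm {d : ℕ} (z : Fin d → ℤ) : ℝ :=
  Real.sqrt (∑ i, ((z i : ℝ)) ^ 2)

open Real Finset Filter
open scoped ENNReal NNReal

def supN {d : ℕ} (z : Fin d → ℤ) : ℕ := Finset.univ.sup fun i => (z i).natAbs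

lemma latNorm_nonneg {d : ℕ} (z : Fin d → ℤ) : 0 ≤ latNorm z := Real.sqrt_nonneg _

lemma supN_le_latNorm {d : ℕ} (z : Fin d → ℤ) : (supN z : ℝ) ≤ latNorm z := by
  rcases Finset.eq_empty_or_nonempty (Finset.univ : Finset (Fin d)) with h | h
  · simp [supN, h, latNorm_nonneg]
  · obtain ⟨i, -, hi⟩ := Finset.exists_mem_eq_sup Finset.univ h fun i => (z i).natAbs
    rw [supN, hi]
    have h1 : ((z i).natAbs : ℝ) = |((z i : ℝ))| := by
      rw [Nat.cast_natAbs]; exact Int.cast_abs ..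
    rw [h1, latNorm]
    have h2 : ((z i : ℝ)) ^ 2 ≤ ∑ j, ((z j : ℝ)) ^ 2 :=
      Finset.single_le_sum (f := fun j => ((z j : ℝ))^2) (fun j _ => sq_nonneg _) (Finset.mem_univ i)
    calc |((z i : ℝ))| = Real.sqrt (((z i : ℝ)) ^ 2) := (Real.sqrt_sq_eq_abs _).symm
      _ ≤ _ := Real.sqrt_le_sqrt h2

lemma mem_piFinset_iff {d : ℕ} (k : ℕ) (z : Fin d → ℤ) :
    z ∈ Fintype.piFinset (fun _ : Fin d => Finset.Icc (-(k:ℤ)) k) ↔ supN z ≤ k := by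
  rw [Fintype.mem_piFinset, supN]
  constructor
  · intro h
    apply Finset.sup_le
    intro i _
    have := h i
    rw [Finset.mem_Icc] at this
    omega
  · intro h i
    have : (z i).natAbs ≤ k :=
      le_trans (Finset.le_sup (f := fun i => (z i).natAbs) (Finset.mem_univ i)) h
    rw [Finset.mem_Icc]
    omega

lemma card_piFinset_eq {d : ℕ} (k : ℕ) :
    (Fintype.piFinset (fun _ : Fin d => Finset.Icc (-(k:ℤ)) k)).card = (2*k+1)^d := by
  rw [Fintype.card_piFinset]
  have : (Finset.Icc (-(k:ℤ)) k).card = 2*k+1 := by rw [Int.card_Icc]; omega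
  simp [this]

lemma sq_le_four_mul_exp {x : ℝ} (h : 0 ≤ x) : x^2 ≤ 4 * Real.exp x := by
  have h1 := Real.add_one_le_exp (x/2)
  have h2 : Real.exp x = Real.exp (x/2) * Real.exp (x/2) := by
    rw [← Real.exp_add]; ring_nf
  nlinarith [Real.exp_pos (x/2)]

lemma telescope_hasSum (f : ℕ → ℝ) (h0 : ∀ n, f (n+1) ≤ f n)
    (hlim : Tendsto f atTop (nhds 0)) :
    HasSum (fun k => f k - f (k+1)) (f 0) := by
  rw [hasSum_iff_tendsto_nat_of_nonneg (fun i => by linarith [h0 i])]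
  have : (fun n : ℕ => ∑ i ∈ Finset.range n, (f i - f (i+1))) = fun n => f 0 - f n := by
    funext n; exact Finset.sum_range_sub' f n
  rw [this]
  simpa using (tendsto_const_nhds.sub hlim)

section Params

variable {d : ℕ} {b R : ℝ}

/-- The majorant shell function. -/
noncomputable def G (d : ℕ) (b R : ℝ) (k : ℕ) : ℝ :=
  (((k:ℝ)+1)^d)⁻¹ * Real.exp (-(b*k)/R)

lemma G_nonneg (d : ℕ) (b R : ℝ) (k : ℕ) : 0 ≤ G d b R k := by
  unfold G; positivity

lemma G_antitone (hb : 0 < b) (hR : 0 < R) (k : ℕ) : G d b R (k+1) ≤ G d b R k := by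
  unfold G
  apply mul_le_mul
  · apply inv_anti₀
    · positivity
    · apply pow_le_pow_left₀ (by positivity)
      push_cast; linarith
  · apply Real.exp_le_exp.2
    rw [div_le_div_iff₀ hR hR]
    push_cast
    nlinarith
  · positivity
  · positivity

lemma G_tendsto_zero (hd : 1 ≤ d) (hb : 0 < b) (hR : 0 < R) :
    Tendsto (G d b R) atTop (nhds 0) := by
  apply squeeze_zero (fun k => G_nonneg d b R k) (g := fun k : ℕ => ((k:ℝ)+1)⁻¹)
  · intro k
    unfold G
    calc (((k:ℝ)+1)^d)⁻¹ * Real.exp (-(b*k)/R) ≤ (((k:ℝ)+1)^d)⁻¹ * 1 := by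
          apply mul_le_mul_of_nonneg_left _ (by positivity)
          apply Real.exp_le_one_iff.2
          have h0 : 0 ≤ b*(k:ℝ) := by positivity
          have : -(b*(k:ℝ))/R ≤ 0 := div_nonpos_of_nonpos_of_nonneg (by linarith) hR.le
          linarith
      _ = (((k:ℝ)+1)^d)⁻¹ := mul_one _
      _ ≤ ((k:ℝ)+1)⁻¹ := by
          apply inv_anti₀ (by positivity)
          calc (k:ℝ)+1 = ((k:ℝ)+1)^1 := (pow_one _).symm
            _ ≤ ((k:ℝ)+1)^d := pow_le_pow_right₀ (by linarith [Nat.cast_nonneg (α := ℝ) k]) hd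
  · exact_mod_cast (tendsto_one_div_add_atTop_nhds_zero_nat (𝕜 := ℝ)).congr (fun n => (one_div _))

end Params


lemma rpow_neg_two_eq (x : ℝ) (hx : 0 < x) : x ^ (-(2:ℝ)) = (x^(2:ℕ))⁻¹ := by
  rw [← Real.rpow_natCast x 2, ← Real.rpow_neg hx.le]; norm_num

lemma min_bound (b R m : ℝ) (hb : 0 < b) (hR : 2 ≤ R) (hm : 0 ≤ m) :
    (min m R + 1) ^ (-(2:ℝ)) * Real.exp (-(b*m)/R) ≤ (1+16/b^2) * (((m+1):ℝ)^(2:ℕ))⁻¹ := by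
  have hR0 : (0:ℝ) < R := by linarith
  have hm1 : (0:ℝ) < m + 1 := by linarith
  have hK : (1:ℝ) ≤ 1 + 16/b^2 := by
    have : (0:ℝ) ≤ 16/b^2 := by positivity
    linarith
  rcases le_total m R with h | h
  · rw [min_eq_left h, rpow_neg_two_eq _ hm1]
    have he : Real.exp (-(b*m)/R) ≤ 1 := by
      apply Real.exp_le_one_iff.2
      have : 0 ≤ b*m/R := by positivity
      rw [neg_div]; linarith
    calc ((m+1)^(2:ℕ))⁻¹ * Real.exp (-(b*m)/R) ≤ ((m+1)^(2:ℕ))⁻¹ * 1 := by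
          apply mul_le_mul_of_nonneg_left he (by positivity)
      _ = ((m+1)^(2:ℕ))⁻¹ := mul_one _
      _ ≤ (1+16/b^2) * ((m+1)^(2:ℕ))⁻¹ := le_mul_of_one_le_left (by positivity) hK
  · -- R ≤ m
    have hm2 : (2:ℝ) ≤ m := le_trans hR h
    rw [min_eq_right h, rpow_neg_two_eq _ (by linarith : (0:ℝ) < R + 1)]
    have hx : (b*m/R)^2 ≤ 4 * Real.exp (b*m/R) := sq_le_four_mul_exp (by positivity)
    have he : Real.exp (-(b*m)/R) = (Real.exp (b*m/R))⁻¹ := by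
      rw [neg_div, Real.exp_neg]
    set E := Real.exp (b*m/R) with hEdef
    have hE : 0 < E := Real.exp_pos _
    have hkey : b^2*m^2 ≤ 4*R^2*E := by
      have hc : b*m/R*R = b*m := div_mul_cancel₀ _ (ne_of_gt hR0)
      have hc2 : (b*m/R)^2 * R^2 = b^2*m^2 := by rw [← mul_pow, hc]; ring
      nlinarith [mul_le_mul_of_nonneg_right hx (sq_nonneg R)]
    have hgoal : 1*(m+1)^(2:ℕ) ≤ (1+16/b^2) * ((R+1)^(2:ℕ)*E) := by
      have h2 : (1:ℝ)+16/b^2 = (b^2+16)/b^2 := by field_simp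
      rw [one_mul, h2, div_mul_eq_mul_div, le_div_iff₀ (by positivity)]
      nlinarith [hkey, hE.le, mul_nonneg (sq_nonneg b) (by nlinarith : (0:ℝ) ≤ 4*m^2-(m+1)^2),
        mul_nonneg (mul_nonneg (sq_nonneg b) (sq_nonneg (R+1))) hE.le,
        mul_nonneg (by nlinarith : (0:ℝ) ≤ 16*((R+1)^2 - R^2)) hE.le]
    rw [he]
    calc ((R+1)^(2:ℕ))⁻¹ * E⁻¹ = (((R+1)^(2:ℕ)) * E)⁻¹ := (mul_inv _ _).symm
      _ ≤ (1+16/b^2) * (((m+1):ℝ)^(2:ℕ))⁻¹ := by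
          rw [inv_eq_one_div, inv_eq_one_div, mul_one_div,
            div_le_div_iff₀ (by positivity) (by positivity)]
          linarith [hgoal]

lemma pointwise (d : ℕ) (hd : 3 ≤ d) (c R n m : ℝ) (hc : 0 < c) (hR : 2 ≤ R)
    (hm : 0 ≤ m) (hmn : m ≤ n) :
    (min n R + 1) ^ (-(2:ℝ)) * Real.exp (-c * n / R) * (n + 1) ^ ((2:ℝ) - d)
      ≤ (1 + 64/c^2) * ((((m+1):ℝ)^d)⁻¹ * Real.exp (-(c/2*m)/R)) := by
  have hb : 0 < c/2 := by linarith
  have hR0 : (0:ℝ) < R := by linarith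
  have hn : 0 ≤ n := le_trans hm hmn
  have hminm : (0:ℝ) ≤ min m R := le_min hm (by linarith)
  have hminn : (0:ℝ) ≤ min n R := le_min hn (by linarith)
  have hm1 : (0:ℝ) < m + 1 := by linarith
  have hdR : ((2:ℝ) - d) ≤ 0 := by
    have : (3:ℝ) ≤ d := by exact_mod_cast hd
    linarith
  have h1 : (min n R + 1) ^ (-(2:ℝ)) ≤ (min m R + 1) ^ (-(2:ℝ)) :=
    Real.rpow_le_rpow_of_nonpos (by linarith)
      (by simp only [add_le_add_iff_right]; exact min_le_min hmn le_rfl) (by norm_num)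
  have h2 : Real.exp (-c * n / R) ≤ Real.exp (-(c/2*m)/R) * Real.exp (-(c/2*m)/R) := by
    rw [← Real.exp_add, ← add_div]
    apply Real.exp_le_exp.2
    rw [div_le_div_iff₀ hR0 hR0]
    nlinarith [mul_le_mul_of_nonneg_left hmn hc.le]
  have h3 : (n + 1) ^ ((2:ℝ) - d) ≤ (m + 1) ^ ((2:ℝ) - d) :=
    Real.rpow_le_rpow_of_nonpos hm1 (by linarith) hdR
  have hmb := min_bound (c/2) R m hb hR hm
  have hcb : 16/(c/2)^2 = 64/c^2 := by
    rw [show ((c:ℝ)/2)^2 = c^2/4 by ring, div_div_eq_mul_div]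
    norm_num
  rw [hcb] at hmb
  have hpow : ((((m+1):ℝ))^(2:ℕ))⁻¹ * (m+1) ^ ((2:ℝ) - d) = (((m+1):ℝ)^d)⁻¹ := by
    rw [← rpow_neg_two_eq _ hm1, ← Real.rpow_add hm1]
    have : -(2:ℝ) + ((2:ℝ)-d) = -(d:ℝ) := by ring
    rw [this, Real.rpow_neg hm1.le, Real.rpow_natCast]
  calc (min n R + 1) ^ (-(2:ℝ)) * Real.exp (-c * n / R) * (n + 1) ^ ((2:ℝ) - d)
      ≤ (min m R + 1) ^ (-(2:ℝ)) * (Real.exp (-(c/2*m)/R) * Real.exp (-(c/2*m)/R))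
          * (m + 1) ^ ((2:ℝ) - d) := by
        apply mul_le_mul _ h3 (Real.rpow_nonneg (by linarith) _)
        · positivity
        · exact mul_le_mul h1 h2 (Real.exp_pos _).le (Real.rpow_nonneg (by linarith) _)
    _ = ((min m R + 1) ^ (-(2:ℝ)) * Real.exp (-(c/2*m)/R))
          * (m + 1) ^ ((2:ℝ) - d) * Real.exp (-(c/2*m)/R) := by ring
    _ ≤ ((1 + 64/c^2) * ((((m+1):ℝ)^(2:ℕ))⁻¹))
          * (m + 1) ^ ((2:ℝ) - d) * Real.exp (-(c/2*m)/R) := by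
        apply mul_le_mul_of_nonneg_right _ (Real.exp_pos _).le
        exact mul_le_mul_of_nonneg_right hmb (Real.rpow_nonneg (by linarith) _)
    _ = (1 + 64/c^2) * (((((m+1):ℝ))^(2:ℕ))⁻¹ * (m+1) ^ ((2:ℝ) - d))
          * Real.exp (-(c/2*m)/R) := by ring
    _ = (1 + 64/c^2) * ((((m+1):ℝ)^d)⁻¹ * Real.exp (-(c/2*m)/R)) := by
        rw [hpow]; ring

lemma D_le (d : ℕ) (b R : ℝ) (hb : 0 < b) (hR : 0 < R) (k : ℕ) :
    G d b R k - G d b R (k+1) ≤ G d b R k * ((d:ℝ)/((k:ℝ)+2) + b/R) := by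
  have hk1 : (0:ℝ) < (k:ℝ)+1 := by positivity
  have hk2 : (0:ℝ) < (k:ℝ)+2 := by positivity
  set p := (((k:ℝ)+1)/((k:ℝ)+2))^d with hp
  set q := Real.exp (-b/R) with hq
  have hGk1 : G d b R (k+1) = G d b R k * (p*q) := by
    unfold G
    push_cast
    rw [hp, hq, div_pow,
      show -(b*((k:ℝ)+1))/R = -(b*(k:ℝ))/R + -b/R by ring, Real.exp_add]
    field_simp
    ring
  have hG0 : 0 ≤ G d b R k := by unfold G; positivity
  have hp0 : 0 ≤ p := by positivity
  have hp1 : p ≤ 1 := pow_le_one₀ (by positivity) (by rw [div_le_one hk2]; linarith)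
  have hq0 : 0 ≤ q := Real.exp_nonneg _
  have hq1 : q ≤ 1 := Real.exp_le_one_iff.2 (by
    have : 0 ≤ b/R := by positivity
    rw [neg_div]; linarith)
  have hpB : 1 - p ≤ (d:ℝ)/((k:ℝ)+2) := by
    have hber := one_add_mul_le_pow (a := -(1/((k:ℝ)+2)))
      (by nlinarith [one_div_pos.2 hk2, (div_le_one hk2).2 (by linarith : (1:ℝ) ≤ (k:ℝ)+2)]) d
    have hsimp : (1 + -(1/((k:ℝ)+2)))^d = p := by
      rw [hp]; congr 1; field_simp; ring
    rw [hsimp] at hber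
    have : (d:ℝ) * -(1/((k:ℝ)+2)) = -((d:ℝ)/((k:ℝ)+2)) := by ring
    rw [this] at hber
    linarith
  have hqB : 1 - q ≤ b/R := by
    have := Real.add_one_le_exp (-b/R)
    rw [← hq, neg_div] at this
    linarith
  rw [hGk1]
  nlinarith [mul_nonneg hG0 (mul_nonneg (sub_nonneg.2 hp1) (sub_nonneg.2 hq1)),
    mul_le_mul_of_nonneg_left (show (1-p)+(1-q) ≤ (d:ℝ)/((k:ℝ)+2)+b/R by linarith) hG0]


section
variable {d : ℕ} {b R : ℝ}

lemma exp_eq_pow (b R : ℝ) (k : ℕ) :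
    Real.exp (-(b*k)/R) = (Real.exp (-(b/R)))^k := by
  rw [show -(b*(k:ℝ))/R = (k:ℝ) * (-(b/R)) by ring, Real.exp_nat_mul]

lemma inv_one_sub_r_le (hb : 0 < b) (hR : 2 ≤ R) :
    (1 - Real.exp (-(b/R)))⁻¹ ≤ (R+b)/b := by
  have hR0 : (0:ℝ) < R := by linarith
  set r := Real.exp (-(b/R)) with hr
  have hrle : r ≤ 1/(1+b/R) := by
    have h1 := Real.add_one_le_exp (b/R)
    have h2 : r = 1/Real.exp (b/R) := by rw [hr, Real.exp_neg, one_div]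
    rw [h2]
    apply one_div_le_one_div_of_le (by positivity) (by linarith)
  have h5 : (1:ℝ) - 1/(1+b/R) = b/(R+b) := by
    rw [show (1:ℝ)+b/R = (R+b)/R by field_simp]
    rw [one_div_div]
    field_simp
    ring
  have h6 : b/(R+b) ≤ 1 - r := by linarith
  calc (1-r)⁻¹ ≤ (b/(R+b))⁻¹ := by
        apply inv_anti₀ (by positivity) h6
    _ = (R+b)/b := by rw [inv_div]
end

lemma sumE (d : ℕ) (hd : 1 ≤ d) (b R : ℝ) (hb : 0 < b) (hR : 2 ≤ R) :
    Summable (fun k : ℕ => Real.exp (-(b*k)/R) * ((d:ℝ)/((k:ℝ)+2) + b/R)) ∧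
    ∑' k : ℕ, Real.exp (-(b*k)/R) * ((d:ℝ)/((k:ℝ)+2) + b/R)
      ≤ 2*(d:ℝ)*Real.log R + ((d:ℝ)*(1+b)/b + (1+b)) := by
  have hR0 : (0:ℝ) < R := by linarith
  have hd0 : (0:ℝ) < (d:ℝ) := by exact_mod_cast Nat.pos_of_ne_zero (by omega)
  set r := Real.exp (-(b/R)) with hr
  have hr0 : 0 ≤ r := Real.exp_nonneg _
  have hr1 : r < 1 := by
    rw [hr]
    apply Real.exp_lt_one_iff.2
    rw [neg_lt, neg_zero]
    positivity
  have hgeo : Summable (fun k : ℕ => r^k) := summable_geometric_of_lt_one hr0 hr1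
  have hgeo_sum : ∑' k : ℕ, r^k = (1-r)⁻¹ := tsum_geometric_of_lt_one hr0 hr1
  have hinv := inv_one_sub_r_le hb hR
  rw [← hr] at hinv
  -- the two pieces
  set E1 : ℕ → ℝ := fun k => r^k * ((d:ℝ)/((k:ℝ)+2)) with hE1
  set E2 : ℕ → ℝ := fun k => r^k * (b/R) with hE2
  have hE1nn : ∀ k, 0 ≤ E1 k := fun k => by rw [hE1]; positivity
  have hE1sum : Summable E1 := by
    apply Summable.of_nonneg_of_le hE1nn (fun k => ?_) (hgeo.mul_right ((d:ℝ)))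
    rw [hE1]
    apply mul_le_mul_of_nonneg_left _ (pow_nonneg hr0 k)
    exact div_le_self hd0.le (by push_cast; linarith [Nat.cast_nonneg (α := ℝ) k])
  have hE2sum : Summable E2 := hgeo.mul_right _
  have hEeq : (fun k : ℕ => Real.exp (-(b*k)/R) * ((d:ℝ)/((k:ℝ)+2) + b/R))
      = fun k => E1 k + E2 k := by
    funext k
    rw [hE1, hE2, exp_eq_pow, ← hr]
    ring
  constructor
  · rw [hEeq]; exact hE1sum.add hE2sum
  · rw [hEeq, Summable.tsum_add hE1sum hE2sum]
    -- bound E2 sum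
    have hS2 : ∑' k, E2 k ≤ 1 + b := by
      rw [hE2, tsum_mul_right, hgeo_sum]
      calc (1-r)⁻¹ * (b/R) ≤ (R+b)/b * (b/R) := by
            apply mul_le_mul_of_nonneg_right hinv (by positivity)
        _ = 1 + b/R := by field_simp
        _ ≤ 1 + b := by
            have : b/R ≤ b := div_le_self hb.le (by linarith)
            linarith
    -- bound E1 sum
    set N := ⌈R⌉₊ with hN
    have hNR : R ≤ (N:ℝ) := Nat.le_ceil R
    have hN1 : (N:ℝ) + 1 < R + 2 := by
      have := Nat.ceil_lt_add_one (by linarith : (0:ℝ) ≤ R)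
      rw [← hN] at this
      linarith
    have hsplit := Summable.sum_add_tsum_nat_add N hE1sum
    have hhead : ∑ i ∈ Finset.range N, E1 i ≤ (d:ℝ) * Real.log ((N:ℝ)+1) := by
      have hstep : ∀ i : ℕ, E1 i ≤ (d:ℝ) * (Real.log ((i:ℝ)+2) - Real.log ((i:ℝ)+1)) := by
        intro i
        have hi1 : (0:ℝ) < (i:ℝ)+1 := by positivity
        have hi2 : (0:ℝ) < (i:ℝ)+2 := by positivity
        have hlog : 1/((i:ℝ)+2) ≤ Real.log ((i:ℝ)+2) - Real.log ((i:ℝ)+1) := by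
          have h := Real.log_le_sub_one_of_pos (show (0:ℝ) < ((i:ℝ)+1)/((i:ℝ)+2) by positivity)
          rw [Real.log_div (ne_of_gt hi1) (ne_of_gt hi2)] at h
          have h2 : ((i:ℝ)+1)/((i:ℝ)+2) - 1 = -(1/((i:ℝ)+2)) := by field_simp; norm_num
          rw [h2] at h
          linarith
        calc E1 i ≤ 1 * ((d:ℝ)/((i:ℝ)+2)) := by
              rw [hE1]
              apply mul_le_mul_of_nonneg_right (pow_le_one₀ hr0 hr1.le) (by positivity)
          _ = (d:ℝ) * (1/((i:ℝ)+2)) := by ring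
          _ ≤ (d:ℝ) * (Real.log ((i:ℝ)+2) - Real.log ((i:ℝ)+1)) :=
              mul_le_mul_of_nonneg_left hlog hd0.le
      calc ∑ i ∈ Finset.range N, E1 i
          ≤ ∑ i ∈ Finset.range N, (d:ℝ) * (Real.log ((i:ℝ)+2) - Real.log ((i:ℝ)+1)) :=
            Finset.sum_le_sum fun i _ => hstep i
        _ = (d:ℝ) * ∑ i ∈ Finset.range N,
              ((fun j : ℕ => Real.log ((j:ℝ)+1)) (i+1) - (fun j : ℕ => Real.log ((j:ℝ)+1)) i) := by
            rw [Finset.mul_sum]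
            congr 1; funext i
            push_cast
            ring_nf
        _ = (d:ℝ) * (Real.log ((N:ℝ)+1) - Real.log ((0:ℝ)+1)) := by
            rw [Finset.sum_range_sub (f := fun j : ℕ => Real.log ((j:ℝ)+1))]
            norm_num
        _ = (d:ℝ) * Real.log ((N:ℝ)+1) := by norm_num
    have htail : ∑' k, E1 (k + N) ≤ (d:ℝ)*(1+b)/b := by
      have hle : ∀ k : ℕ, E1 (k + N) ≤ r^k * ((d:ℝ)/R) := by
        intro k
        rw [hE1]
        apply mul_le_mul
        · calc r^(k+N) = r^k * r^N := pow_add r k N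
            _ ≤ r^k * 1 := mul_le_mul_of_nonneg_left (pow_le_one₀ hr0 hr1.le) (pow_nonneg hr0 k)
            _ = r^k := mul_one _
        · apply div_le_div_of_nonneg_left hd0.le hR0
          push_cast
          linarith [Nat.cast_nonneg (α := ℝ) k]
        · positivity
        · positivity
      calc ∑' k, E1 (k + N) ≤ ∑' k : ℕ, r^k * ((d:ℝ)/R) := by
            apply Summable.tsum_le_tsum hle ((summable_nat_add_iff N).2 hE1sum) (hgeo.mul_right _)
        _ = (1-r)⁻¹ * ((d:ℝ)/R) := by rw [tsum_mul_right, hgeo_sum]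
        _ ≤ (R+b)/b * ((d:ℝ)/R) := mul_le_mul_of_nonneg_right hinv (by positivity)
        _ = (d:ℝ) * (1 + b/R) / b := by field_simp
        _ ≤ (d:ℝ)*(1+b)/b := by
            rw [div_le_div_iff₀ hb hb]
            have hbr : b/R ≤ b := div_le_self hb.le (by linarith)
            nlinarith [mul_le_mul_of_nonneg_left hbr (by positivity : (0:ℝ) ≤ (d:ℝ)*b)]
    have hlogN : Real.log ((N:ℝ)+1) ≤ 2 * Real.log R := by
      have h1 : (N:ℝ)+1 ≤ R^2 := by nlinarith
      calc Real.log ((N:ℝ)+1) ≤ Real.log (R^2) :=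
            Real.log_le_log (by positivity) h1
        _ = 2 * Real.log R := by
            rw [Real.log_pow]; norm_num
    have hS1 : ∑' k, E1 k ≤ 2*(d:ℝ)*Real.log R + (d:ℝ)*(1+b)/b := by
      rw [← hsplit]
      have : (d:ℝ) * Real.log ((N:ℝ)+1) ≤ 2*(d:ℝ)*Real.log R := by
        calc (d:ℝ) * Real.log ((N:ℝ)+1) ≤ (d:ℝ) * (2*Real.log R) :=
              mul_le_mul_of_nonneg_left hlogN hd0.le
          _ = 2*(d:ℝ)*Real.log R := by ring
      linarith
    linarith

lemma G_layer (d : ℕ) (hd : 1 ≤ d) (b R : ℝ) (hb : 0 < b) (hR : 0 < R) (m : ℕ) :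
    ENNReal.ofReal (G d b R m)
      = ∑' k : ℕ, (if m ≤ k then ENNReal.ofReal (G d b R k - G d b R (k+1)) else 0) := by
  have ht : Tendsto (fun j : ℕ => G d b R (m + j)) atTop (nhds 0) := by
    have h := (G_tendsto_zero hd hb hR).comp (tendsto_add_atTop_nat m)
    have : (fun j : ℕ => G d b R (m + j)) = fun j : ℕ => G d b R (j + m) := by
      funext j; rw [add_comm]
    rw [this]; exact h
  have hs : HasSum (fun j : ℕ => G d b R (m+j) - G d b R (m+j+1)) (G d b R m) := by
    have := telescope_hasSum (fun j => G d b R (m+j))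
      (fun n => by simpa [add_assoc] using G_antitone hb hR (m+n)) ht
    simpa [add_assoc] using this
  have h1 : ENNReal.ofReal (G d b R m)
      = ∑' j : ℕ, ENNReal.ofReal (G d b R (m+j) - G d b R (m+j+1)) := by
    rw [← hs.tsum_eq]
    exact ENNReal.ofReal_tsum_of_nonneg
      (fun j => by linarith [G_antitone (d := d) hb hR (m+j)]) hs.summable
  rw [h1]
  have h2 : (fun j : ℕ => ENNReal.ofReal (G d b R (m+j) - G d b R (m+j+1)))
      = fun j : ℕ => (if m ≤ m + j then ENNReal.ofReal (G d b R (m+j) - G d b R (m+j+1)) else 0) := by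
    funext j; rw [if_pos (Nat.le_add_right m j)]
  rw [h2]
  exact Function.Injective.tsum_eq
    (f := fun k : ℕ => if m ≤ k then ENNReal.ofReal (G d b R k - G d b R (k+1)) else 0)
    (add_right_injective m) (by
    intro k hk
    simp only [Function.mem_support, ne_eq, ite_eq_right_iff, not_forall] at hk
    obtain ⟨hmk, -⟩ := hk
    exact ⟨k - m, by simp; omega⟩)

lemma count_layer (d : ℕ) (k : ℕ) (a : ℝ≥0∞) :
    ∑' z : Fin d → ℤ, (if supN z ≤ k then a else 0) = (((2*k+1)^d : ℕ) : ℝ≥0∞) * a := by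
  rw [tsum_eq_sum (s := Fintype.piFinset fun _ : Fin d => Finset.Icc (-(k:ℤ)) k)
    (fun z hz => if_neg (fun h => hz ((mem_piFinset_iff k z).2 h)))]
  rw [Finset.sum_congr rfl (fun z hz => if_pos ((mem_piFinset_iff k z).1 hz)),
    Finset.sum_const, card_piFinset_eq]
  simp [nsmul_eq_mul]

lemma main_EN (d : ℕ) (hd : 3 ≤ d) (b R : ℝ) (hb : 0 < b) (hR : 2 ≤ R) :
    ∑' z : Fin d → ℤ, ENNReal.ofReal (G d b R (supN z))
      ≤ ENNReal.ofReal ((2:ℝ)^d * (2*(d:ℝ)*Real.log R + ((d:ℝ)*(1+b)/b + (1+b)))) := by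
  have hR0 : (0:ℝ) < R := by linarith
  have hd1 : 1 ≤ d := by omega
  set E' : ℕ → ℝ := fun k => (2:ℝ)^d * (Real.exp (-(b*k)/R) * ((d:ℝ)/((k:ℝ)+2) + b/R)) with hE'
  have hkey : ∀ k : ℕ, ((2*(k:ℝ)+1)^d) * (G d b R k - G d b R (k+1)) ≤ E' k := by
    intro k
    have hk1 : (0:ℝ) < (k:ℝ)+1 := by positivity
    have hs0 : (0:ℝ) ≤ (d:ℝ)/((k:ℝ)+2) + b/R := by positivity
    have h2 : (2*(k:ℝ)+1)^d ≤ 2^d * ((k:ℝ)+1)^d := by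
      rw [← mul_pow]
      apply pow_le_pow_left₀ (by positivity)
      linarith
    calc ((2*(k:ℝ)+1)^d) * (G d b R k - G d b R (k+1))
        ≤ ((2*(k:ℝ)+1)^d) * (G d b R k * ((d:ℝ)/((k:ℝ)+2) + b/R)) :=
          mul_le_mul_of_nonneg_left (D_le d b R hb hR0 k) (by positivity)
      _ = ((2*(k:ℝ)+1)^d * (((k:ℝ)+1)^d)⁻¹)
            * (Real.exp (-(b*k)/R) * ((d:ℝ)/((k:ℝ)+2) + b/R)) := by
          unfold G; ring
      _ ≤ (2:ℝ)^d * (Real.exp (-(b*k)/R) * ((d:ℝ)/((k:ℝ)+2) + b/R)) := by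
          apply mul_le_mul_of_nonneg_right _ (by positivity)
          rw [mul_inv_le_iff₀ (by positivity : (0:ℝ) < ((k:ℝ)+1)^d)]
          exact h2
      _ = E' k := rfl
  have hEnn : ∀ k, 0 ≤ E' k := fun k => by rw [hE']; positivity
  have hEsum : Summable E' := ((sumE d hd1 b R hb hR).1).mul_left _
  calc ∑' z : Fin d → ℤ, ENNReal.ofReal (G d b R (supN z))
      = ∑' z : Fin d → ℤ, ∑' k : ℕ,
          (if supN z ≤ k then ENNReal.ofReal (G d b R k - G d b R (k+1)) else 0) :=
        tsum_congr fun z => G_layer d hd1 b R hb hR0 (supN z)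
    _ = ∑' k : ℕ, ∑' z : Fin d → ℤ,
          (if supN z ≤ k then ENNReal.ofReal (G d b R k - G d b R (k+1)) else 0) :=
        ENNReal.tsum_comm
    _ = ∑' k : ℕ, (((2*k+1)^d : ℕ) : ℝ≥0∞) * ENNReal.ofReal (G d b R k - G d b R (k+1)) :=
        tsum_congr fun k => count_layer d k _
    _ ≤ ∑' k : ℕ, ENNReal.ofReal (E' k) := by
        apply ENNReal.tsum_le_tsum
        intro k
        rw [← ENNReal.ofReal_natCast ((2*k+1)^d), ← ENNReal.ofReal_mul (Nat.cast_nonneg _)]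
        apply ENNReal.ofReal_le_ofReal
        calc (((2*k+1)^d : ℕ) : ℝ) * (G d b R k - G d b R (k+1))
            = ((2*(k:ℝ)+1)^d) * (G d b R k - G d b R (k+1)) := by push_cast; ring
          _ ≤ E' k := hkey k
    _ = ENNReal.ofReal (∑' k, E' k) := (ENNReal.ofReal_tsum_of_nonneg hEnn hEsum).symm
    _ ≤ ENNReal.ofReal ((2:ℝ)^d * (2*(d:ℝ)*Real.log R + ((d:ℝ)*(1+b)/b + (1+b)))) := by
        apply ENNReal.ofReal_le_ofReal
        rw [hE', tsum_mul_left]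
        exact mul_le_mul_of_nonneg_left (sumE d hd1 b R hb hR).2 (by positivity)

/-- Main theorem. -/
theorem stmt_13 (d : ℕ) (hd : 3 ≤ d) (c : ℝ) (hc : 0 < c) :
    ∃ C : ℝ, 0 < C ∧ ∀ R : ℝ, 2 ≤ R → ∀ x : Fin d → ℤ,
      ∑' z : Fin d → ℤ,
          (min (latNorm z) R + 1) ^ (-(2 : ℝ)) * Real.exp (-c * latNorm z / R)
            * (latNorm z + 1) ^ ((2 : ℝ) - d)
        ≤ C * Real.log R := by
  set b : ℝ := c/2 with hbdef
  have hb : 0 < b := by rw [hbdef]; linarith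
  set K₁ : ℝ := 1 + 64/c^2 with hK₁
  have hK₁0 : 0 < K₁ := by rw [hK₁]; positivity
  set A : ℝ := (d:ℝ)*(1+b)/b + (1+b) with hA
  have hA0 : 0 < A := by rw [hA]; positivity
  set C : ℝ := K₁ * (2:ℝ)^d * (2*(d:ℝ) + A / Real.log 2) with hC
  have hlog2 : 0 < Real.log 2 := Real.log_pos (by norm_num)
  refine ⟨C, by rw [hC]; positivity, ?_⟩
  intro R hR x
  have hR0 : (0:ℝ) < R := by linarith
  have hlogR : Real.log 2 ≤ Real.log R := Real.log_le_log (by norm_num) hR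
  have hlogR0 : 0 < Real.log R := lt_of_lt_of_le hlog2 hlogR
  set f : (Fin d → ℤ) → ℝ := fun z =>
    (min (latNorm z) R + 1) ^ (-(2 : ℝ)) * Real.exp (-c * latNorm z / R)
      * (latNorm z + 1) ^ ((2 : ℝ) - d) with hf
  have hfnn : ∀ z, 0 ≤ f z := by
    intro z
    have h1 : (0:ℝ) ≤ min (latNorm z) R := le_min (latNorm_nonneg z) hR0.le
    have h2 : (0:ℝ) ≤ latNorm z := latNorm_nonneg z
    rw [hf]
    apply mul_nonneg (mul_nonneg (Real.rpow_nonneg (by linarith) _) (Real.exp_pos _).le)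
      (Real.rpow_nonneg (by linarith) _)
  have hpt : ∀ z, f z ≤ K₁ * G d b R (supN z) := by
    intro z
    have := pointwise d hd c R (latNorm z) ((supN z : ℝ)) hc hR
      (Nat.cast_nonneg _) (supN_le_latNorm z)
    rw [hf, hK₁]
    unfold G
    rw [hbdef]
    exact this
  -- real bound on the constant side
  have hCineq : K₁ * ((2:ℝ)^d * (2*(d:ℝ)*Real.log R + A)) ≤ C * Real.log R := by
    have hAle : A ≤ A / Real.log 2 * Real.log R := by
      rw [div_mul_eq_mul_div, le_div_iff₀ hlog2]
      exact mul_le_mul_of_nonneg_left hlogR hA0.le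
    rw [hC]
    have h2d : (0:ℝ) < (2:ℝ)^d := by positivity
    nlinarith [mul_le_mul_of_nonneg_left hAle (by positivity : (0:ℝ) ≤ K₁ * (2:ℝ)^d)]
  -- ENNReal chain
  have hEN : ∑' z : Fin d → ℤ, ENNReal.ofReal (f z) ≤ ENNReal.ofReal (C * Real.log R) := by
    calc ∑' z : Fin d → ℤ, ENNReal.ofReal (f z)
        ≤ ∑' z : Fin d → ℤ, ENNReal.ofReal (K₁ * G d b R (supN z)) :=
          ENNReal.tsum_le_tsum fun z => ENNReal.ofReal_le_ofReal (hpt z)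
      _ = ∑' z : Fin d → ℤ, ENNReal.ofReal K₁ * ENNReal.ofReal (G d b R (supN z)) :=
          tsum_congr fun z => ENNReal.ofReal_mul hK₁0.le
      _ = ENNReal.ofReal K₁ * ∑' z : Fin d → ℤ, ENNReal.ofReal (G d b R (supN z)) :=
          ENNReal.tsum_mul_left
      _ ≤ ENNReal.ofReal K₁
            * ENNReal.ofReal ((2:ℝ)^d * (2*(d:ℝ)*Real.log R + A)) := by
          apply mul_le_mul_right (main_EN d hd b R hb hR)
      _ = ENNReal.ofReal (K₁ * ((2:ℝ)^d * (2*(d:ℝ)*Real.log R + A))) :=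
          (ENNReal.ofReal_mul hK₁0.le).symm
      _ ≤ ENNReal.ofReal (C * Real.log R) := ENNReal.ofReal_le_ofReal hCineq
  by_cases hsumm : Summable f
  · have h1 : ENNReal.ofReal (∑' z, f z) = ∑' z, ENNReal.ofReal (f z) :=
      ENNReal.ofReal_tsum_of_nonneg hfnn hsumm
    have h2 : ENNReal.ofReal (∑' z, f z) ≤ ENNReal.ofReal (C * Real.log R) := h1 ▸ hEN
    exact (ENNReal.ofReal_le_ofReal_iff (by positivity)).1 h2
  · rw [tsum_eq_zero_of_not_summable hsumm]
    positivity
end
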